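/- arXiv:1909.06991 — 5 statements merged into one kernel-verified Lean document; each statement's English description precedes it below -/
import Mathlib

section
/- Let n ≥ 2 and let Ω ⊂ ℝⁿ be a bounded open set with diameter D₀. Let s > 1, 0 < t ≤ ∞, 0 < κ ≤ n, and let f : ℝⁿ → [0, ∞) be measurable, vanishing outside Ω, with ‖f‖_{L^{s,t;κ}(Ω)} < ∞. Then there exists a constant C = C(n, s, κ) > 0 such that sup_{y ∈ Ω} M_{κ/s}^{D₀} f(y) ≤ C ‖f‖_{L^{s,t;κ}(Ω)}. -/
/-!
`L^∞` bound for the cut-off fractional maximal function with exponent `κ/s`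
in terms of the Lorentz–Morrey quasinorm (Lemma 4.6, estimate (4.21) in the
paper): `sup_{y ∈ Ω} M_{κ/s}^{D₀} f(y) ≤ C ‖f‖_{L^{s,t;κ}(Ω)}`, `C = C(n,s,κ)`.
-/

open MeasureTheory Metric Set ENNReal

noncomputable section

/-- Distribution function over a set `Ω` of an `ℝ≥0∞`-valued function. -/
def distFn {n : ℕ} (Ω : Set (EuclideanSpace ℝ (Fin n)))
    (g : EuclideanSpace ℝ (Fin n) → ℝ≥0∞) (lam : ℝ) : ℝ≥0∞ :=
  volume {x ∈ Ω | ENNReal.ofReal lam < g x}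

/-- Lorentz quasinorm `‖g‖_{L^{s,t}(Ω)}` for finite `t`. -/
def lorentzNorm {n : ℕ} (Ω : Set (EuclideanSpace ℝ (Fin n)))
    (g : EuclideanSpace ℝ (Fin n) → ℝ≥0∞) (s t : ℝ) : ℝ≥0∞ :=
  (ENNReal.ofReal s *
    ∫⁻ lam in Set.Ioi (0 : ℝ),
      ENNReal.ofReal (lam ^ (t - 1)) * (distFn Ω g lam) ^ (t / s)) ^ (1 / t)

/-- Marcinkiewicz (weak-`L^s`) quasinorm `‖g‖_{L^{s,∞}(Ω)}`. -/
def weakNorm {n : ℕ} (Ω : Set (EuclideanSpace ℝ (Fin n)))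
    (g : EuclideanSpace ℝ (Fin n) → ℝ≥0∞) (s : ℝ) : ℝ≥0∞ :=
  ⨆ lam ∈ Set.Ioi (0 : ℝ), ENNReal.ofReal lam * (distFn Ω g lam) ^ (1 / s)

/-- Lorentz quasinorm with second exponent `t ∈ (0, ∞]`. -/
def lorentzNormT {n : ℕ} (Ω : Set (EuclideanSpace ℝ (Fin n)))
    (g : EuclideanSpace ℝ (Fin n) → ℝ≥0∞) (s : ℝ) (t : ℝ≥0∞) : ℝ≥0∞ :=
  if t = ∞ then weakNorm Ω g s else lorentzNorm Ω g s t.toReal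

/-- Lorentz–Morrey quasinorm `‖g‖_{L^{s,t;κ}(Ω)}`, with `D₀ = diam Ω`. -/
def lorentzMorrey (n : ℕ) (Ω : Set (EuclideanSpace ℝ (Fin n)))
    (g : EuclideanSpace ℝ (Fin n) → ℝ≥0∞) (s : ℝ) (t : ℝ≥0∞) (κ : ℝ) : ℝ≥0∞ :=
  ⨆ x ∈ Ω, ⨆ ϱ ∈ Set.Ioo (0 : ℝ) (Metric.diam Ω),
    ENNReal.ofReal (ϱ ^ ((κ - (n : ℝ)) / s)) * lorentzNormT (Ω ∩ ball x ϱ) g s t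

/-- Cut-off fractional maximal function `M_α^r g` (supremum over radii `0 < ρ < r`). -/
def fracMaxCut {n : ℕ} (α r : ℝ) (g : EuclideanSpace ℝ (Fin n) → ℝ≥0∞)
    (x : EuclideanSpace ℝ (Fin n)) : ℝ≥0∞ :=
  ⨆ ρ ∈ Set.Ioo (0 : ℝ) r,
    ENNReal.ofReal (ρ ^ α) * ((volume (ball x ρ))⁻¹ * ∫⁻ y in ball x ρ, g y)


lemma e_mul_le_exp (x : ℝ) : Real.exp 1 * x ≤ Real.exp x := by
  have h := Real.add_one_le_exp (x - 1)
  have h2 : Real.exp 1 * x ≤ Real.exp 1 * Real.exp (x - 1) :=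
    mul_le_mul_of_nonneg_left (by linarith) (Real.exp_pos 1).le
  calc Real.exp 1 * x ≤ Real.exp 1 * Real.exp (x - 1) := h2
    _ = Real.exp x := by rw [← Real.exp_add]; ring_nf

lemma rpow_one_div_self_le_two {τ : ℝ} (hτ : 0 < τ) : τ ^ (1 / τ) ≤ 2 := by
  rcases le_or_gt τ 1 with h1 | h1
  · calc τ ^ (1 / τ) ≤ 1 := Real.rpow_le_one hτ.le h1 (by positivity)
      _ ≤ 2 := one_le_two
  · have hle : τ ≤ 2 ^ τ := by
      have hlog : (0.6931471803 : ℝ) < Real.log 2 := Real.log_two_gt_d9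
      have hexp : (2.7182818283 : ℝ) < Real.exp 1 := Real.exp_one_gt_d9
      have h2 : (2 : ℝ) ^ τ = Real.exp (τ * Real.log 2) := by
        rw [Real.rpow_def_of_pos (by norm_num)]; ring_nf
      have h3 := e_mul_le_exp (τ * Real.log 2)
      have hτ0 : (0:ℝ) < τ := hτ
      have a1 : τ * 0.6931471803 ≤ τ * Real.log 2 :=
        mul_le_mul_of_nonneg_left hlog.le hτ.le
      have a2 : 2.7182818283 * (τ * 0.6931471803) ≤ Real.exp 1 * (τ * Real.log 2) :=
        mul_le_mul hexp.le a1 (by positivity) (Real.exp_pos 1).le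
      have step : τ ≤ Real.exp 1 * (τ * Real.log 2) := by nlinarith
      linarith [h2 ▸ (step.trans h3)]
    calc τ ^ (1 / τ) ≤ (2 ^ τ) ^ (1 / τ) :=
          Real.rpow_le_rpow hτ.le hle (by positivity)
      _ = 2 ^ (τ * (1 / τ)) := by rw [← Real.rpow_mul (by norm_num)]
      _ = 2 := by rw [mul_one_div_cancel hτ.ne', Real.rpow_one]


namespace LMaux

variable {n : ℕ}

lemma distFn_anti (E : Set (EuclideanSpace ℝ (Fin n))) (g : EuclideanSpace ℝ (Fin n) → ℝ≥0∞)
    {a b : ℝ} (hab : a ≤ b) : distFn E g b ≤ distFn E g a := by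
  apply measure_mono
  intro x hx
  exact ⟨hx.1, lt_of_le_of_lt (ENNReal.ofReal_le_ofReal hab) hx.2⟩

lemma le_weakNorm (E : Set (EuclideanSpace ℝ (Fin n))) (g : EuclideanSpace ℝ (Fin n) → ℝ≥0∞)
    (s : ℝ) {lam : ℝ} (h : 0 < lam) :
    ENNReal.ofReal lam * (distFn E g lam) ^ (1 / s) ≤ weakNorm E g s :=
  le_iSup₂ (f := fun lam (_ : lam ∈ Set.Ioi (0:ℝ)) =>
    ENNReal.ofReal lam * (distFn E g lam) ^ (1 / s)) lam h

/-- Sub-lemma A: the weak norm is controlled by the Lorentz norm, uniformly in `t`. -/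
lemma weakNorm_le (E : Set (EuclideanSpace ℝ (Fin n))) (g : EuclideanSpace ℝ (Fin n) → ℝ≥0∞)
    {s : ℝ} (hs : 1 < s) {t : ℝ≥0∞} (ht : 0 < t) :
    weakNorm E g s ≤ 2 * lorentzNormT E g s t := by
  unfold lorentzNormT
  split_ifs with hT
  · exact le_mul_of_one_le_left zero_le one_le_two
  · set τ := t.toReal with hτdef
    have hτ : 0 < τ := ENNReal.toReal_pos ht.ne' hT
    refine iSup₂_le fun lam hlam => ?_
    have hlam' : (0:ℝ) < lam := hlam
    set d := distFn E g lam with hd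
    set I := ∫⁻ μ in Set.Ioi (0:ℝ),
        ENNReal.ofReal (μ ^ (τ - 1)) * (distFn E g μ) ^ (τ / s) with hI
    have hs0 : (0:ℝ) < s := by linarith
    -- the integral over (0, lam] bounds `lam^τ/τ * d^(τ/s)` from above
    have key : ENNReal.ofReal (lam ^ τ / τ) * d ^ (τ / s) ≤ I := by
      have step1 : ∫⁻ μ in Set.Ioc (0:ℝ) lam,
          ENNReal.ofReal (μ ^ (τ - 1)) * d ^ (τ / s) ≤ I := by
        refine le_trans (lintegral_mono_ae ?_) (lintegral_mono_set Set.Ioc_subset_Ioi_self)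
        refine (ae_restrict_iff' measurableSet_Ioc).2 (ae_of_all _ fun μ hμ => ?_)
        exact mul_le_mul_right (ENNReal.rpow_le_rpow (distFn_anti E g hμ.2) (by positivity)) _
      have step2 : ∫⁻ μ in Set.Ioc (0:ℝ) lam, ENNReal.ofReal (μ ^ (τ - 1))
          = ENNReal.ofReal (lam ^ τ / τ) := by
        rw [← ofReal_integral_eq_lintegral_ofReal]
        · congr 1
          have := intervalIntegral.integral_of_le (μ := volume)
            (f := fun μ : ℝ => μ ^ (τ - 1)) hlam'.le
          rw [← this, integral_rpow (Or.inl (by linarith))]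
          rw [Real.zero_rpow (by linarith : τ - 1 + 1 ≠ 0)]
          ring_nf
        · have := (intervalIntegral.intervalIntegrable_rpow' (a := 0) (b := lam)
            (r := τ - 1) (by linarith)).1
          exact this
        · exact (ae_restrict_iff' measurableSet_Ioc).2
            (ae_of_all _ fun μ hμ => Real.rpow_nonneg hμ.1.le _)
      calc ENNReal.ofReal (lam ^ τ / τ) * d ^ (τ / s)
          = ∫⁻ μ in Set.Ioc (0:ℝ) lam, ENNReal.ofReal (μ ^ (τ - 1)) * d ^ (τ / s) := by
            have hmeas : Measurable fun μ : ℝ => ENNReal.ofReal (μ ^ (τ - 1)) := by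
              fun_prop
            rw [lintegral_mul_const _ hmeas, step2]
        _ ≤ I := step1
    -- raise to the power `τ` and back
    have main : (ENNReal.ofReal lam * d ^ (1 / s)) ^ τ
        ≤ ENNReal.ofReal (τ / s) * (ENNReal.ofReal s * I) := by
      have e1 : (ENNReal.ofReal lam * d ^ (1 / s)) ^ τ
          = ENNReal.ofReal (lam ^ τ) * d ^ (τ / s) := by
        rw [ENNReal.mul_rpow_of_nonneg _ _ hτ.le, ← ENNReal.ofReal_rpow_of_pos hlam',
          ← ENNReal.rpow_mul]
        congr 1
        field_simp
      have e2 : ENNReal.ofReal (τ / s) * ENNReal.ofReal s = ENNReal.ofReal τ := by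
        rw [← ENNReal.ofReal_mul (by positivity)]
        congr 1
        field_simp
      have e3 : ENNReal.ofReal τ * ENNReal.ofReal (lam ^ τ / τ) = ENNReal.ofReal (lam ^ τ) := by
        rw [← ENNReal.ofReal_mul hτ.le]
        congr 1
        field_simp
      calc (ENNReal.ofReal lam * d ^ (1 / s)) ^ τ
          = ENNReal.ofReal (lam ^ τ) * d ^ (τ / s) := e1
        _ = ENNReal.ofReal τ * (ENNReal.ofReal (lam ^ τ / τ) * d ^ (τ / s)) := by
            rw [← mul_assoc, e3]
        _ ≤ ENNReal.ofReal τ * I := mul_le_mul_right key _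
        _ = ENNReal.ofReal (τ / s) * (ENNReal.ofReal s * I) := by rw [← mul_assoc, e2]
    have conc := ENNReal.rpow_le_rpow main (by positivity : (0:ℝ) ≤ 1 / τ)
    rw [← ENNReal.rpow_mul, mul_one_div_cancel hτ.ne', ENNReal.rpow_one,
      ENNReal.mul_rpow_of_nonneg _ _ (by positivity : (0:ℝ) ≤ 1 / τ),
      ENNReal.ofReal_rpow_of_pos (by positivity)] at conc
    unfold lorentzNorm
    refine conc.trans (mul_le_mul_left ?_ _)
    calc ENNReal.ofReal ((τ / s) ^ (1 / τ)) ≤ ENNReal.ofReal 2 := by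
          apply ENNReal.ofReal_le_ofReal
          calc (τ / s) ^ (1 / τ) ≤ τ ^ (1 / τ) :=
                Real.rpow_le_rpow (by positivity) (div_le_self hτ.le hs.le) (by positivity)
            _ ≤ 2 := rpow_one_div_self_le_two hτ
      _ = 2 := ENNReal.ofReal_ofNat 2

/-- Sub-lemma B: `L¹` bound on a set of finite measure via the weak norm. -/
lemma setLintegral_le {s : ℝ} (hs : 1 < s) {E : Set (EuclideanSpace ℝ (Fin n))}
    (hV : volume E ≠ ∞) {f : EuclideanSpace ℝ (Fin n) → ℝ}
    (hf : Measurable f) (hf0 : ∀ x, 0 ≤ f x) :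
    ∫⁻ x in E, ENNReal.ofReal (f x) ≤
      ENNReal.ofReal (s / (s - 1)) * weakNorm E (fun z => ENNReal.ofReal (f z)) s
        * (volume E) ^ (1 - 1 / s) := by
  have hs0 : (0:ℝ) < s := by linarith
  set g : EuclideanSpace ℝ (Fin n) → ℝ≥0∞ := fun z => ENNReal.ofReal (f z) with hg
  set W := weakNorm E g s with hW
  set V := volume E with hVdef
  by_cases hV0 : V = 0
  · rw [show volume.restrict E = 0 from Measure.restrict_eq_zero.2 hV0,
      lintegral_zero_measure]
    exact zero_le
  -- layer cake
  have layer : ∫⁻ x in E, ENNReal.ofReal (f x) = ∫⁻ lam in Set.Ioi (0:ℝ), distFn E g lam := by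
    rw [lintegral_eq_lintegral_meas_lt (volume.restrict E) (ae_of_all _ hf0) hf.aemeasurable]
    refine setLIntegral_congr_fun measurableSet_Ioi (fun lam hlam => ?_)
    have hlam' : (0:ℝ) < lam := hlam
    rw [Measure.restrict_apply (measurableSet_lt measurable_const hf)]
    unfold distFn
    congr 1
    ext x
    simp only [Set.mem_inter_iff, Set.mem_setOf_eq]
    constructor
    · rintro ⟨h1, h2⟩
      exact ⟨h2, (ENNReal.ofReal_lt_ofReal_iff_of_nonneg hlam'.le).2 h1⟩
    · rintro ⟨h2, h1⟩
      exact ⟨(ENNReal.ofReal_lt_ofReal_iff_of_nonneg hlam'.le).1 h1, h2⟩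
  by_cases hW0 : W = 0
  · have hzero : ∀ lam ∈ Set.Ioi (0:ℝ), distFn E g lam = (0:ℝ≥0∞) := by
      intro lam hlam
      have h := le_weakNorm E g s (show (0:ℝ) < lam from hlam)
      rw [← hW, hW0, nonpos_iff_eq_zero, mul_eq_zero] at h
      rcases h with h | h
      · exact absurd h (by simp [ENNReal.ofReal_eq_zero]; linarith [show (0:ℝ) < lam from hlam])
      · rcases (ENNReal.rpow_eq_zero_iff).1 h with ⟨h1, _⟩ | ⟨_, h2⟩
        · exact h1
        · exact absurd h2 (not_lt.2 (by positivity))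
    rw [layer, setLIntegral_congr_fun measurableSet_Ioi hzero, lintegral_zero]
    exact zero_le
  by_cases hWtop : W = ⊤
  · have hRHS : ENNReal.ofReal (s / (s - 1)) * W * V ^ (1 - 1/s) = ⊤ := by
      rw [hWtop, ENNReal.mul_top (ENNReal.ofReal_pos.2 (div_pos hs0 (by linarith))).ne',
        ENNReal.top_mul (by simp [ENNReal.rpow_eq_zero_iff, hV0, hV])]
    rw [hRHS]
    exact le_top
  set v := V.toReal with hv'
  set w := W.toReal with hw'
  have hv : 0 < v := ENNReal.toReal_pos hV0 hV
  have hw : 0 < w := ENNReal.toReal_pos hW0 hWtop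
  have hVv : V = ENNReal.ofReal v := (ENNReal.ofReal_toReal hV).symm
  have hWw : W = ENNReal.ofReal w := (ENNReal.ofReal_toReal hWtop).symm
  set lam0 := w * v ^ (-(1/s)) with hlam0
  have hlam0pos : 0 < lam0 := by positivity
  -- pointwise bounds
  have bd2 : ∀ lam ∈ Set.Ioi lam0, distFn E g lam ≤ W ^ s * ENNReal.ofReal (lam ^ (-s)) := by
    intro lam hlam
    have hlam' : 0 < lam := lt_trans hlam0pos hlam
    have h := le_weakNorm E g s hlam'
    have hne0 : ENNReal.ofReal lam ≠ 0 := by simp [ENNReal.ofReal_eq_zero]; linarith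
    have h2 : (distFn E g lam) ^ (1/s) ≤ W / ENNReal.ofReal lam := by
      rw [ENNReal.le_div_iff_mul_le (Or.inl hne0) (Or.inl ENNReal.ofReal_ne_top), mul_comm]
      exact h
    have h3 := ENNReal.rpow_le_rpow h2 hs0.le
    rw [← ENNReal.rpow_mul, one_div_mul_cancel hs0.ne', ENNReal.rpow_one,
      ENNReal.div_rpow_of_nonneg _ _ hs0.le, ENNReal.ofReal_rpow_of_pos hlam',
      div_eq_mul_inv, ← ENNReal.ofReal_inv_of_pos (Real.rpow_pos_of_pos hlam' s),
      ← Real.rpow_neg hlam'.le] at h3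
    exact h3
  -- splitting the integral
  have splitI : ∫⁻ lam in Set.Ioi (0:ℝ), distFn E g lam
      = (∫⁻ lam in Set.Ioc (0:ℝ) lam0, distFn E g lam)
        + ∫⁻ lam in Set.Ioi lam0, distFn E g lam := by
    rw [← lintegral_union measurableSet_Ioi (Set.Ioc_disjoint_Ioi le_rfl),
      Set.Ioc_union_Ioi_eq_Ioi hlam0pos.le]
  have int1 : ∫⁻ lam in Set.Ioc (0:ℝ) lam0, distFn E g lam ≤ V * ENNReal.ofReal lam0 := by
    calc ∫⁻ lam in Set.Ioc (0:ℝ) lam0, distFn E g lam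
        ≤ ∫⁻ _ in Set.Ioc (0:ℝ) lam0, V :=
          lintegral_mono fun lam => measure_mono (Set.sep_subset _ _)
      _ = V * volume (Set.Ioc (0:ℝ) lam0) := setLIntegral_const _ _
      _ = V * ENNReal.ofReal lam0 := by rw [Real.volume_Ioc, sub_zero]
  have hmeas2 : Measurable fun lam : ℝ => ENNReal.ofReal (lam ^ (-s)) := by fun_prop
  have int2 : ∫⁻ lam in Set.Ioi lam0, distFn E g lam
      ≤ W ^ s * ENNReal.ofReal (lam0 ^ (1 - s) / (s - 1)) := by
    calc ∫⁻ lam in Set.Ioi lam0, distFn E g lam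
        ≤ ∫⁻ lam in Set.Ioi lam0, W ^ s * ENNReal.ofReal (lam ^ (-s)) :=
          lintegral_mono_ae ((ae_restrict_iff' measurableSet_Ioi).2 (ae_of_all _ bd2))
      _ = W ^ s * ∫⁻ lam in Set.Ioi lam0, ENNReal.ofReal (lam ^ (-s)) :=
          lintegral_const_mul _ hmeas2
      _ = W ^ s * ENNReal.ofReal (lam0 ^ (1 - s) / (s - 1)) := by
          congr 1
          rw [← ofReal_integral_eq_lintegral_ofReal
            (integrableOn_Ioi_rpow_of_lt (by linarith) hlam0pos)
            ((ae_restrict_iff' measurableSet_Ioi).2 (ae_of_all _ fun lam hlam =>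
              Real.rpow_nonneg (le_of_lt (lt_trans hlam0pos hlam)) _))]
          rw [integral_Ioi_rpow_of_lt (by linarith) hlam0pos]
          rw [show -s + 1 = 1 - s by ring, show s - 1 = -(1 - s) by ring, div_neg, ← neg_div]
  -- real-number computation
  have hv1 : v * v ^ (-(1/s)) = v ^ (1 - 1/s) := by
    rw [show (1 : ℝ) - 1/s = 1 + (-(1/s)) by ring, Real.rpow_add hv, Real.rpow_one]
  have e1 : lam0 ^ (1 - s) = w ^ (1 - s) * v ^ (1 - 1/s) := by
    rw [hlam0, Real.mul_rpow hw.le (Real.rpow_nonneg hv.le _), ← Real.rpow_mul hv.le]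
    congr 2
    field_simp
    ring
  have e2 : w ^ s * w ^ (1 - s) = w := by
    rw [← Real.rpow_add hw]
    norm_num
  have final_real : v * lam0 + w ^ s * (lam0 ^ (1 - s) / (s - 1))
      = s / (s - 1) * w * v ^ (1 - 1/s) := by
    calc v * lam0 + w ^ s * (lam0 ^ (1 - s) / (s - 1))
        = w * (v * v ^ (-(1/s))) + (w ^ s * w ^ (1 - s)) * v ^ (1 - 1/s) / (s - 1) := by
          rw [e1, hlam0]; ring
      _ = w * v ^ (1 - 1/s) + w * v ^ (1 - 1/s) / (s - 1) := by rw [hv1, e2]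
      _ = s / (s - 1) * w * v ^ (1 - 1/s) := by
          have h1s : s - 1 ≠ 0 := by linarith
          field_simp
          ring
  calc ∫⁻ x in E, ENNReal.ofReal (f x)
      = ∫⁻ lam in Set.Ioi (0:ℝ), distFn E g lam := layer
    _ = (∫⁻ lam in Set.Ioc (0:ℝ) lam0, distFn E g lam)
        + ∫⁻ lam in Set.Ioi lam0, distFn E g lam := splitI
    _ ≤ V * ENNReal.ofReal lam0 + W ^ s * ENNReal.ofReal (lam0 ^ (1 - s) / (s - 1)) :=
        add_le_add int1 int2
    _ = ENNReal.ofReal (v * lam0 + w ^ s * (lam0 ^ (1 - s) / (s - 1))) := by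
        rw [hVv, hWw, ENNReal.ofReal_rpow_of_pos hw, ← ENNReal.ofReal_mul hv.le,
          ← ENNReal.ofReal_mul (Real.rpow_nonneg hw.le _),
          ← ENNReal.ofReal_add (mul_nonneg hv.le hlam0pos.le)
            (mul_nonneg (Real.rpow_nonneg hw.le _)
              (div_nonneg (Real.rpow_nonneg hlam0pos.le _) (by linarith)))]
    _ = ENNReal.ofReal (s / (s - 1) * w * v ^ (1 - 1/s)) := by rw [final_real]
    _ = ENNReal.ofReal (s / (s - 1)) * W * V ^ (1 - 1/s) := by
        rw [hVv, hWw, ENNReal.ofReal_rpow_of_pos hv,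
          ← ENNReal.ofReal_mul (div_nonneg hs0.le (by linarith)),
          ← ENNReal.ofReal_mul (mul_nonneg (div_nonneg hs0.le (by linarith)) hw.le)]

end LMaux


theorem statement3 (n : ℕ) (hn : 2 ≤ n) (s κ : ℝ) (hs : 1 < s)
    (hκ0 : 0 < κ) (hκn : κ ≤ (n : ℝ)) :
    ∃ C > (0 : ℝ), ∀ (Ω : Set (EuclideanSpace ℝ (Fin n))) (t : ℝ≥0∞)
      (f : EuclideanSpace ℝ (Fin n) → ℝ),
      IsOpen Ω → Bornology.IsBounded Ω → 0 < t →
      Measurable f → (∀ x, 0 ≤ f x) → (∀ x, x ∉ Ω → f x = 0) →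
      lorentzMorrey n Ω (fun z => ENNReal.ofReal (f z)) s t κ ≠ ∞ →
      (⨆ y ∈ Ω, fracMaxCut (κ / s) (Metric.diam Ω) (fun z => ENNReal.ofReal (f z)) y) ≤
        ENNReal.ofReal C * lorentzMorrey n Ω (fun z => ENNReal.ofReal (f z)) s t κ := by
  classical
  have hs0 : (0:ℝ) < s := by linarith
  have hs1 : (0:ℝ) < s - 1 := by linarith
  set B1 := volume (ball (0 : EuclideanSpace ℝ (Fin n)) 1) with hB1
  have hB1pos : 0 < B1 := measure_ball_pos _ _ one_pos
  have hB1top : B1 ≠ ⊤ := measure_ball_lt_top.ne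
  set cB := B1.toReal with hcB
  have hcBpos : 0 < cB := ENNReal.toReal_pos hB1pos.ne' hB1top
  have he : (0:ℝ) ≤ 1 - 1/s := by
    rw [sub_nonneg]
    exact (div_le_one hs0).2 hs.le
  refine ⟨s / (s - 1) * 2 * cB ^ (-(1/s)),
    mul_pos (mul_pos (div_pos hs0 hs1) two_pos) (Real.rpow_pos_of_pos hcBpos _), ?_⟩
  intro Ω t f hopen hbdd ht hfm hf0 hfΩ _hfin
  set g : EuclideanSpace ℝ (Fin n) → ℝ≥0∞ := fun z => ENNReal.ofReal (f z) with hg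
  have hC : ENNReal.ofReal (s / (s - 1) * 2 * cB ^ (-(1/s)))
      = ENNReal.ofReal (s/(s-1)) * 2 * ENNReal.ofReal (cB ^ (-(1/s))) := by
    rw [ENNReal.ofReal_mul (mul_nonneg (div_nonneg hs0.le hs1.le) two_pos.le),
      ENNReal.ofReal_mul (div_nonneg hs0.le hs1.le), ENNReal.ofReal_ofNat]
  refine iSup₂_le fun y hy => ?_
  unfold fracMaxCut
  refine iSup₂_le fun ρ hρ => ?_
  obtain ⟨hρ0, hρD⟩ := hρ
  set B := ball y ρ with hBdef
  set E := Ω ∩ B with hEdef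
  have hΩm : MeasurableSet Ω := hopen.measurableSet
  have hx0 : volume B ≠ 0 := (measure_ball_pos _ _ hρ0).ne'
  have hxt : volume B ≠ ⊤ := measure_ball_lt_top.ne
  have hvol : volume B = ENNReal.ofReal (ρ ^ n) * B1 := by
    rw [hBdef, Measure.addHaar_ball_of_pos _ _ hρ0, hB1]
    congr 2
    simp [finrank_euclideanSpace]
  have step1 : ∫⁻ z in B, g z = ∫⁻ z in E, g z := by
    have hgind : g = Ω.indicator g := by
      funext z
      by_cases hz : z ∈ Ω
      · rw [Set.indicator_of_mem hz]
      · rw [Set.indicator_of_notMem hz, hg]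
        simp [hfΩ z hz]
    conv_lhs => rw [hgind]
    rw [lintegral_indicator hΩm, Measure.restrict_restrict hΩm]
  have hEV : volume E ≤ volume B := measure_mono Set.inter_subset_right
  have step2 := LMaux.setLintegral_le (E := E) hs (ne_top_of_le_ne_top hxt hEV) hfm hf0
  have step3 := LMaux.weakNorm_le E g hs ht
  set L := lorentzNormT E g s t with hL
  have step4 : ∫⁻ z in E, g z ≤ ENNReal.ofReal (s/(s-1)) * (2 * L) * (volume B) ^ (1 - 1/s) :=
    step2.trans (mul_le_mul' (mul_le_mul_right step3 _) (ENNReal.rpow_le_rpow hEV he))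
  have hxx : (volume B)⁻¹ * (volume B) ^ ((1:ℝ) - 1/s) = (volume B) ^ (-(1/s)) := by
    rw [← ENNReal.rpow_neg_one (volume B), ← ENNReal.rpow_add _ _ hx0 hxt]
    congr 1
    ring
  have hreal : ρ ^ (κ/s) * ((ρ:ℝ) ^ n) ^ (-(1/s)) = ρ ^ ((κ - (n:ℝ))/s) := by
    rw [← Real.rpow_natCast ρ n, ← Real.rpow_mul hρ0.le, ← Real.rpow_add hρ0]
    congr 1
    field_simp
    ring
  have hkey : ENNReal.ofReal (ρ ^ (κ/s)) * (volume B) ^ (-(1/s))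
      = ENNReal.ofReal (cB ^ (-(1/s))) * ENNReal.ofReal (ρ ^ ((κ - (n:ℝ))/s)) := by
    calc ENNReal.ofReal (ρ ^ (κ/s)) * (volume B) ^ (-(1/s))
        = ENNReal.ofReal (ρ ^ (κ/s)) *
            (ENNReal.ofReal (((ρ:ℝ) ^ n) ^ (-(1/s))) * ENNReal.ofReal (cB ^ (-(1/s)))) := by
          rw [hvol, ENNReal.mul_rpow_of_ne_top ENNReal.ofReal_ne_top hB1top,
            ENNReal.ofReal_rpow_of_pos (pow_pos hρ0 n),
            show B1 = ENNReal.ofReal cB from (ENNReal.ofReal_toReal hB1top).symm,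
            ENNReal.ofReal_rpow_of_pos hcBpos]
      _ = ENNReal.ofReal (cB ^ (-(1/s))) *
            ENNReal.ofReal (ρ ^ (κ/s) * ((ρ:ℝ) ^ n) ^ (-(1/s))) := by
          rw [ENNReal.ofReal_mul (Real.rpow_nonneg (by positivity) _)]
          ring
      _ = ENNReal.ofReal (cB ^ (-(1/s))) * ENNReal.ofReal (ρ ^ ((κ - (n:ℝ))/s)) := by
          rw [hreal]
  have hsup : ENNReal.ofReal (ρ ^ ((κ - (n:ℝ))/s)) * L ≤ lorentzMorrey n Ω g s t κ := by
    unfold lorentzMorrey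
    refine le_trans ?_ (le_iSup₂ (f := fun x (_ : x ∈ Ω) =>
      ⨆ ϱ ∈ Set.Ioo (0:ℝ) (Metric.diam Ω),
        ENNReal.ofReal (ϱ ^ ((κ - (n:ℝ))/s)) * lorentzNormT (Ω ∩ ball x ϱ) g s t) y hy)
    exact le_iSup₂ (f := fun ϱ (_ : ϱ ∈ Set.Ioo (0:ℝ) (Metric.diam Ω)) =>
      ENNReal.ofReal (ϱ ^ ((κ - (n:ℝ))/s)) * lorentzNormT (Ω ∩ ball y ϱ) g s t) ρ ⟨hρ0, hρD⟩
  calc ENNReal.ofReal (ρ ^ (κ/s)) * ((volume B)⁻¹ * ∫⁻ z in B, g z)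
      = ENNReal.ofReal (ρ ^ (κ/s)) * ((volume B)⁻¹ * ∫⁻ z in E, g z) := by rw [step1]
    _ ≤ ENNReal.ofReal (ρ ^ (κ/s)) * ((volume B)⁻¹ *
          (ENNReal.ofReal (s/(s-1)) * (2 * L) * (volume B) ^ ((1:ℝ) - 1/s))) := by
        gcongr
    _ = (ENNReal.ofReal (s/(s-1)) * 2) *
          ((ENNReal.ofReal (ρ ^ (κ/s)) * ((volume B)⁻¹ * (volume B) ^ ((1:ℝ) - 1/s))) * L) := by
        ring
    _ = (ENNReal.ofReal (s/(s-1)) * 2) *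
          ((ENNReal.ofReal (cB ^ (-(1/s))) * ENNReal.ofReal (ρ ^ ((κ - (n:ℝ))/s))) * L) := by
        rw [hxx, ← mul_assoc, hkey, mul_assoc]
    _ = ENNReal.ofReal (s / (s - 1) * 2 * cB ^ (-(1/s))) *
          (ENNReal.ofReal (ρ ^ ((κ - (n:ℝ))/s)) * L) := by
        rw [hC]
        ring
    _ ≤ ENNReal.ofReal (s / (s - 1) * 2 * cB ^ (-(1/s))) * lorentzMorrey n Ω g s t κ :=
        mul_le_mul_right hsup _
end
end

section
/- Let n ≥ 2, q > 0, let Ω ⊆ ℝⁿ be measurable, and let g : ℝⁿ → [0, ∞) be locally integrable. Set U = (M g)^{1/q} and, for x ∈ ℝⁿ and r > 0, set U_{2r}^x = (M^{2r}(χ_{B_{2r}(x)} g))^{1/q}. For every a > 0 there exists ε₀ = ε₀(a, n, q) ∈ (0,1) such that for all ε ∈ (0, ε₀), all λ > 0, all x ∈ ℝⁿ and all r > 0: if there exists ξ₁ ∈ Ω ∩ B_r(x) with U(ξ₁) ≤ λ, then d_U(B_r(x); ε^{−a} λ) ≤ d_{U_{2r}^x}(B_r(x); ε^{−a} λ). 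-/
/-!
Lemma 4.2 of the paper: localization of level sets of the maximal function.
With `U = (M g)^{1/q}` and `U_{2r}^x = (M^{2r}(χ_{B_{2r}(x)} g))^{1/q}`:
for every `a > 0` there is `ε₀ = ε₀(a,n,q) ∈ (0,1)` such that if some
`ξ₁ ∈ Ω ∩ B_r(x)` satisfies `U(ξ₁) ≤ λ`, then
`d_U(B_r(x); ε^{-a} λ) ≤ d_{U_{2r}^x}(B_r(x); ε^{-a} λ)` for all `ε ∈ (0, ε₀)`.
-/

open MeasureTheory Metric Set ENNReal

noncomputable section

/-- Fractional maximal function `M_α g`. -/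
def fracMax {n : ℕ} (α : ℝ) (g : EuclideanSpace ℝ (Fin n) → ℝ≥0∞)
    (x : EuclideanSpace ℝ (Fin n)) : ℝ≥0∞ :=
  ⨆ ρ ∈ Set.Ioi (0 : ℝ),
    ENNReal.ofReal (ρ ^ α) * ((volume (ball x ρ))⁻¹ * ∫⁻ y in ball x ρ, g y)

lemma term_le_fracMax {n : ℕ} (G : EuclideanSpace ℝ (Fin n) → ℝ≥0∞)
    (ξ : EuclideanSpace ℝ (Fin n)) {ρ : ℝ} (hρ : 0 < ρ) :
    (volume (ball ξ ρ))⁻¹ * ∫⁻ y in ball ξ ρ, G y ≤ fracMax 0 G ξ := by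
  have h := le_iSup₂ (f := fun (ρ : ℝ) (_ : ρ ∈ Set.Ioi (0:ℝ)) =>
    ENNReal.ofReal (ρ ^ (0:ℝ)) * ((volume (ball ξ ρ))⁻¹ * ∫⁻ y in ball ξ ρ, G y)) ρ hρ
  simpa [fracMax, Real.rpow_zero] using h

lemma term_le_fracMaxCut {n : ℕ} (G : EuclideanSpace ℝ (Fin n) → ℝ≥0∞)
    (ξ : EuclideanSpace ℝ (Fin n)) {ρ R : ℝ} (hρ : 0 < ρ) (hρR : ρ < R) :
    (volume (ball ξ ρ))⁻¹ * ∫⁻ y in ball ξ ρ, G y ≤ fracMaxCut 0 R G ξ := by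
  have h := le_iSup₂ (f := fun (ρ : ℝ) (_ : ρ ∈ Set.Ioo (0:ℝ) R) =>
    ENNReal.ofReal (ρ ^ (0:ℝ)) * ((volume (ball ξ ρ))⁻¹ * ∫⁻ y in ball ξ ρ, G y))
    ρ (⟨hρ, hρR⟩ : ρ ∈ Set.Ioo (0:ℝ) R)
  simpa [fracMaxCut, Real.rpow_zero] using h

theorem statement5 (n : ℕ) (hn : 2 ≤ n) (q a : ℝ) (hq : 0 < q) (ha : 0 < a) :
    ∃ ε₀ : ℝ, 0 < ε₀ ∧ ε₀ < 1 ∧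
      ∀ (Ω : Set (EuclideanSpace ℝ (Fin n))) (g : EuclideanSpace ℝ (Fin n) → ℝ)
        (x : EuclideanSpace ℝ (Fin n)) (r ε lam : ℝ),
        MeasurableSet Ω → LocallyIntegrable g volume → (∀ z, 0 ≤ g z) →
        0 < r → 0 < ε → ε < ε₀ → 0 < lam →
        (∃ ξ₁ ∈ Ω ∩ ball x r,
          (fracMax 0 (fun z => ENNReal.ofReal (g z)) ξ₁) ^ (1 / q) ≤ ENNReal.ofReal lam) →
        distFn (ball x r ∩ Ω)
            (fun ξ => (fracMax 0 (fun z => ENNReal.ofReal (g z)) ξ) ^ (1 / q))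
            (ε ^ (-a) * lam) ≤
          distFn (ball x r ∩ Ω)
            (fun ξ => (fracMaxCut 0 (2 * r)
              (fun z => ENNReal.ofReal (((ball x (2 * r)).indicator g) z)) ξ) ^ (1 / q))
            (ε ^ (-a) * lam) := by
  haveI : Nontrivial (EuclideanSpace ℝ (Fin n)) := by
    haveI : NeZero n := ⟨by omega⟩
    infer_instance
  have h3 : (0:ℝ) < 3 := by norm_num
  set c : ℝ := (3:ℝ) ^ (-((n:ℝ) / (q * a))) with hc
  have hcpos : 0 < c := Real.rpow_pos_of_pos h3 _
  have hclt1 : c < 1 := by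
    apply Real.rpow_lt_one_of_one_lt_of_neg (by norm_num)
    have hn0 : (0:ℝ) < (n:ℝ) := by exact_mod_cast lt_of_lt_of_le (by norm_num) hn
    have : (0:ℝ) < (n:ℝ) / (q * a) := by positivity
    linarith
  refine ⟨c, hcpos, hclt1, ?_⟩
  rintro Ω g x r ε lam hΩ hgint hg0 hr hε hεc hlam ⟨ξ₁, ⟨hξ₁Ω, hξ₁B⟩, hU₁⟩
  set G : EuclideanSpace ℝ (Fin n) → ℝ≥0∞ := fun z => ENNReal.ofReal (g z) with hG
  set Gc : EuclideanSpace ℝ (Fin n) → ℝ≥0∞ :=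
    fun z => ENNReal.ofReal (((ball x (2 * r)).indicator g) z) with hGc
  -- real arithmetic: 3 ^ (n/q) ≤ ε ^ (-a)
  have hεa : (3:ℝ) ^ ((n:ℝ) / q) ≤ ε ^ (-a) := by
    have h1 : ε ^ a ≤ c ^ a := Real.rpow_le_rpow hε.le hεc.le ha.le
    have h2 : c ^ a = (3:ℝ) ^ (-((n:ℝ) / q)) := by
      rw [hc, ← Real.rpow_mul h3.le]
      congr 1
      field_simp
    rw [h2] at h1
    have h4 : ((3:ℝ) ^ (-((n:ℝ) / q)))⁻¹ ≤ (ε ^ a)⁻¹ :=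
      inv_anti₀ (Real.rpow_pos_of_pos hε _) h1
    rwa [← Real.rpow_neg h3.le, ← Real.rpow_neg hε.le, neg_neg] at h4
  have hεapos : 0 < ε ^ (-a) := Real.rpow_pos_of_pos hε _
  have hspos : 0 < ε ^ (-a) * lam := mul_pos hεapos hlam
  -- key real inequality: 3^n * lam^q ≤ (ε^(-a) * lam)^q
  have hkey : (3:ℝ) ^ (n:ℕ) * lam ^ q ≤ (ε ^ (-a) * lam) ^ q := by
    rw [Real.mul_rpow hεapos.le hlam.le]
    have h5 : ((3:ℝ) ^ ((n:ℝ) / q)) ^ q ≤ (ε ^ (-a)) ^ q :=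
      Real.rpow_le_rpow (Real.rpow_pos_of_pos h3 _).le hεa hq.le
    have h6 : ((3:ℝ) ^ ((n:ℝ) / q)) ^ q = (3:ℝ) ^ (n:ℕ) := by
      rw [← Real.rpow_mul h3.le, div_mul_cancel₀ _ hq.ne', Real.rpow_natCast]
    rw [h6] at h5
    exact mul_le_mul_of_nonneg_right h5 (Real.rpow_nonneg hlam.le q)
  -- bound from ξ₁ : fracMax G ξ₁ ≤ ofReal (lam^q)
  have hM₁ : fracMax 0 G ξ₁ ≤ ENNReal.ofReal (lam ^ q) := by
    have h7 := ENNReal.rpow_le_rpow hU₁ hq.le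
    rwa [← ENNReal.rpow_mul, one_div_mul_cancel hq.ne', ENNReal.rpow_one,
      ENNReal.ofReal_rpow_of_pos hlam] at h7
  -- main set inclusion
  apply measure_mono
  rintro ξ ⟨hξS, hξU⟩
  refine ⟨hξS, ?_⟩
  obtain ⟨hξB, -⟩ := hξS
  simp only at hξU ⊢
  -- raise to power q
  set T : ℝ≥0∞ := ENNReal.ofReal (ε ^ (-a) * lam) with hT
  have hTq : T ^ q = ENNReal.ofReal ((ε ^ (-a) * lam) ^ q) :=
    ENNReal.ofReal_rpow_of_pos hspos
  have hξUq : T ^ q < fracMax 0 G ξ := by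
    have := ENNReal.rpow_lt_rpow hξU hq
    rwa [← ENNReal.rpow_mul, one_div_mul_cancel hq.ne', ENNReal.rpow_one] at this
  -- the pointwise splitting
  have hsplit : fracMax 0 G ξ ≤
      max (fracMaxCut 0 (2 * r) Gc ξ) (ENNReal.ofReal ((3:ℝ) ^ (n:ℕ)) * fracMax 0 G ξ₁) := by
    rw [fracMax]
    refine iSup₂_le fun ρ hρ => ?_
    rw [Set.mem_Ioi] at hρ
    rw [Real.rpow_zero, ENNReal.ofReal_one, one_mul]
    rcases lt_or_ge ρ r with hρr | hρr
    · -- small radius: equal to the cut term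
      refine le_max_of_le_left ?_
      have heq : ∫⁻ y in ball ξ ρ, G y = ∫⁻ y in ball ξ ρ, Gc y := by
        refine setLIntegral_congr_fun measurableSet_ball ?_
        intro y hy
        have : y ∈ ball x (2 * r) := by
          have h1 : dist y x ≤ dist y ξ + dist ξ x := dist_triangle y ξ x
          have h2 : dist y ξ < ρ := mem_ball.mp hy
          have h3 : dist ξ x < r := mem_ball.mp hξB
          rw [mem_ball]
          linarith
        simp [hGc, hG, Set.indicator_of_mem this]
      rw [heq]
      exact term_le_fracMaxCut Gc ξ hρ (by linarith)
    · -- large radius: compare with ball around ξ₁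
      refine le_max_of_le_right ?_
      have hsub : ball ξ ρ ⊆ ball ξ₁ (3 * ρ) := by
        intro y hy
        have h1 : dist y ξ₁ ≤ dist y ξ + dist ξ x + dist x ξ₁ := by
          calc dist y ξ₁ ≤ dist y ξ + dist ξ ξ₁ := dist_triangle y ξ ξ₁
            _ ≤ dist y ξ + (dist ξ x + dist x ξ₁) := by
                exact add_le_add_right (dist_triangle ξ x ξ₁) _
            _ = dist y ξ + dist ξ x + dist x ξ₁ := by ring
        have h2 : dist y ξ < ρ := mem_ball.mp hy
        have h3 : dist ξ x < r := mem_ball.mp hξB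
        have h4 : dist x ξ₁ < r := by
          rw [dist_comm]; exact mem_ball.mp hξ₁B
        rw [mem_ball]
        linarith
      have hvol : volume (ball ξ₁ (3 * ρ)) =
          ENNReal.ofReal ((3:ℝ) ^ (n:ℕ)) * volume (ball ξ ρ) := by
        rw [Measure.addHaar_ball _ _ (by positivity : (0:ℝ) ≤ 3 * ρ),
          Measure.addHaar_ball _ _ hρ.le, finrank_euclideanSpace_fin,
          mul_pow, ENNReal.ofReal_mul (by positivity), mul_assoc]
      have hvne : volume (ball ξ ρ) ≠ 0 := (measure_ball_pos _ _ hρ).ne'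
      have hvfin : volume (ball ξ ρ) ≠ ⊤ := measure_ball_lt_top.ne
      have hinv : (volume (ball ξ ρ))⁻¹ =
          ENNReal.ofReal ((3:ℝ) ^ (n:ℕ)) * (volume (ball ξ₁ (3 * ρ)))⁻¹ := by
        rw [hvol, ENNReal.mul_inv (Or.inl (by positivity)) (Or.inl ENNReal.ofReal_ne_top),
          ← mul_assoc, ENNReal.mul_inv_cancel (by positivity) ENNReal.ofReal_ne_top, one_mul]
      calc (volume (ball ξ ρ))⁻¹ * ∫⁻ y in ball ξ ρ, G y
          ≤ (volume (ball ξ ρ))⁻¹ * ∫⁻ y in ball ξ₁ (3 * ρ), G y :=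
            mul_le_mul_right (lintegral_mono_set hsub) _
        _ = ENNReal.ofReal ((3:ℝ) ^ (n:ℕ)) *
            ((volume (ball ξ₁ (3 * ρ)))⁻¹ * ∫⁻ y in ball ξ₁ (3 * ρ), G y) := by
            rw [hinv, mul_assoc]
        _ ≤ ENNReal.ofReal ((3:ℝ) ^ (n:ℕ)) * fracMax 0 G ξ₁ :=
            mul_le_mul_right (term_le_fracMax G ξ₁ (by positivity)) _
  -- combine
  have hBle : ENNReal.ofReal ((3:ℝ) ^ (n:ℕ)) * fracMax 0 G ξ₁ ≤ T ^ q := by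
    calc ENNReal.ofReal ((3:ℝ) ^ (n:ℕ)) * fracMax 0 G ξ₁
        ≤ ENNReal.ofReal ((3:ℝ) ^ (n:ℕ)) * ENNReal.ofReal (lam ^ q) :=
          mul_le_mul_right hM₁ _
      _ = ENNReal.ofReal ((3:ℝ) ^ (n:ℕ) * lam ^ q) := (ENNReal.ofReal_mul (by positivity)).symm
      _ ≤ ENNReal.ofReal ((ε ^ (-a) * lam) ^ q) := ENNReal.ofReal_le_ofReal hkey
      _ = T ^ q := hTq.symm
  have hcut : T ^ q < fracMaxCut 0 (2 * r) Gc ξ := by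
    rcases max_cases (fracMaxCut 0 (2 * r) Gc ξ)
      (ENNReal.ofReal ((3:ℝ) ^ (n:ℕ)) * fracMax 0 G ξ₁) with ⟨hmax, _⟩ | ⟨hmax, _⟩
    · rw [hmax] at hsplit; exact lt_of_lt_of_le hξUq hsplit
    · rw [hmax] at hsplit
      exact absurd (lt_of_lt_of_le hξUq hsplit) (not_lt.mpr hBle)
  have := ENNReal.rpow_lt_rpow hcut (by positivity : (0:ℝ) < 1 / q)
  rwa [← ENNReal.rpow_mul, mul_one_div_cancel hq.ne', ENNReal.rpow_one] at this
end
end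

section
/- Let Ω ⊆ ℝⁿ be measurable and let U, Π : Ω → [0, ∞] be measurable functions. Suppose there exist constants a > 0, b ∈ ℝ, C₁ > 0 and ε₀ ∈ (0,1) such that the level-set inequality d_U(ε^{−a} λ) ≤ C₁ ε d_U(λ) + d_Π(ε^{b} λ) holds for all λ > 0 and all ε ∈ (0, ε₀). Then for every s with 0 < s < 1/a and every t with 0 < t < ∞, if ‖U‖_{L^{s,t}(Ω)} < ∞, then ‖U‖_{L^{s,t}(Ω)} ≤ C ‖Π‖_{L^{s,t}(Ω)} for a constant C depending only on a, b, C₁, ε₀, s and t. -/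
open MeasureTheory Metric Set ENNReal

noncomputable section

lemma distFn_antitone {n : ℕ} (Ω : Set (EuclideanSpace ℝ (Fin n)))
    (g : EuclideanSpace ℝ (Fin n) → ℝ≥0∞) : Antitone (distFn Ω g) := by
  intro l1 l2 h
  exact measure_mono fun x hx =>
    ⟨hx.1, lt_of_le_of_lt (ENNReal.ofReal_le_ofReal h) hx.2⟩

lemma lint_Ioi_comp_mul {f : ℝ → ℝ≥0∞} (hf : Measurable f) {c : ℝ} (hc : 0 < c) :
    ∫⁻ x in Ioi (0:ℝ), f (c * x) = ENNReal.ofReal c⁻¹ * ∫⁻ x in Ioi (0:ℝ), f x := by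
  have hind : ∀ x : ℝ, (Ioi (0:ℝ)).indicator (fun x => f (c * x)) x
      = (Ioi (0:ℝ)).indicator f (c * x) := by
    intro x
    by_cases hx : x ∈ Ioi (0:ℝ)
    · rw [Set.indicator_of_mem hx]
      exact (Set.indicator_of_mem (mem_Ioi.mpr (mul_pos hc (mem_Ioi.mp hx))) f).symm
    · rw [Set.indicator_of_notMem hx, Set.indicator_of_notMem]
      intro hcx
      apply hx
      have h2 := mul_pos (inv_pos.2 hc) (mem_Ioi.mp hcx)
      rwa [inv_mul_cancel_left₀ hc.ne'] at h2
  calc ∫⁻ x in Ioi (0:ℝ), f (c * x)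
      = ∫⁻ x, (Ioi (0:ℝ)).indicator (fun x => f (c * x)) x :=
        (lintegral_indicator measurableSet_Ioi _).symm
    _ = ∫⁻ x, (Ioi (0:ℝ)).indicator f (c * x) := by simp_rw [hind]
    _ = ∫⁻ y, (Ioi (0:ℝ)).indicator f y ∂(Measure.map (c * ·) volume) :=
        (lintegral_map (hf.indicator measurableSet_Ioi)
          (measurable_id.const_mul c)).symm
    _ = ENNReal.ofReal |c⁻¹| * ∫⁻ y, (Ioi (0:ℝ)).indicator f y := by
        rw [Real.map_volume_mul_left hc.ne', lintegral_smul_measure, smul_eq_mul]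
    _ = ENNReal.ofReal c⁻¹ * ∫⁻ x in Ioi (0:ℝ), f x := by
        rw [abs_of_pos (inv_pos.2 hc), lintegral_indicator measurableSet_Ioi]

lemma weight_scale {n : ℕ} (Ω : Set (EuclideanSpace ℝ (Fin n)))
    (g : EuclideanSpace ℝ (Fin n) → ℝ≥0∞) (t r : ℝ) {c : ℝ} (hc : 0 < c) :
    ∫⁻ lam in Ioi (0:ℝ), ENNReal.ofReal (lam ^ (t-1)) * (distFn Ω g (c * lam)) ^ r
      = ENNReal.ofReal (c ^ (-t)) *
        ∫⁻ lam in Ioi (0:ℝ), ENNReal.ofReal (lam ^ (t-1)) * (distFn Ω g lam) ^ r := by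
  have hF : Measurable (fun μ : ℝ => ENNReal.ofReal (μ ^ (t-1)) * (distFn Ω g μ) ^ r) :=
    ((measurable_id.pow_const (t-1)).ennreal_ofReal).mul
      ((distFn_antitone Ω g).measurable.pow_const r)
  have step1 : ∀ lam ∈ Ioi (0:ℝ),
      ENNReal.ofReal (lam ^ (t-1)) * (distFn Ω g (c * lam)) ^ r
        = ENNReal.ofReal (c ^ (1-t)) *
          (ENNReal.ofReal ((c * lam) ^ (t-1)) * (distFn Ω g (c * lam)) ^ r) := by
    intro lam hlam
    rw [← mul_assoc, ← ENNReal.ofReal_mul (by positivity)]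
    congr 2
    rw [Real.mul_rpow hc.le (le_of_lt (mem_Ioi.mp hlam)), ← mul_assoc,
      ← Real.rpow_add hc]
    norm_num
  calc ∫⁻ lam in Ioi (0:ℝ), ENNReal.ofReal (lam ^ (t-1)) * (distFn Ω g (c * lam)) ^ r
      = ∫⁻ lam in Ioi (0:ℝ), ENNReal.ofReal (c ^ (1-t)) *
          (ENNReal.ofReal ((c * lam) ^ (t-1)) * (distFn Ω g (c * lam)) ^ r) :=
        setLIntegral_congr_fun measurableSet_Ioi step1
    _ = ENNReal.ofReal (c ^ (1-t)) *
        ∫⁻ lam in Ioi (0:ℝ),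
          ENNReal.ofReal ((c * lam) ^ (t-1)) * (distFn Ω g (c * lam)) ^ r :=
        lintegral_const_mul' _ _ ENNReal.ofReal_ne_top
    _ = ENNReal.ofReal (c ^ (1-t)) * (ENNReal.ofReal c⁻¹ *
        ∫⁻ lam in Ioi (0:ℝ), ENNReal.ofReal (lam ^ (t-1)) * (distFn Ω g lam) ^ r) := by
        rw [lint_Ioi_comp_mul hF hc]
    _ = ENNReal.ofReal (c ^ (-t)) *
        ∫⁻ lam in Ioi (0:ℝ), ENNReal.ofReal (lam ^ (t-1)) * (distFn Ω g lam) ^ r := by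
        rw [← mul_assoc, ← ENNReal.ofReal_mul (by positivity)]
        congr 2
        rw [← Real.rpow_neg_one c, ← Real.rpow_add hc]
        congr 1
        ring

lemma add_rpow_le (x y : ℝ≥0∞) {r : ℝ} (hr : 0 ≤ r) :
    (x + y) ^ r ≤ ENNReal.ofReal ((2:ℝ) ^ r) * (x ^ r + y ^ r) := by
  have h2 : ENNReal.ofReal ((2:ℝ) ^ r) = (2 : ℝ≥0∞) ^ r := by
    rw [← ENNReal.ofReal_rpow_of_pos (by norm_num : (0:ℝ) < 2), ENNReal.ofReal_ofNat]
  rw [h2]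
  have h1 : x + y ≤ 2 * max x y := by
    rcases le_total x y with h | h
    · rw [max_eq_right h, two_mul]; exact add_le_add h le_rfl
    · rw [max_eq_left h, two_mul]; exact add_le_add le_rfl h
  calc (x + y) ^ r ≤ (2 * max x y) ^ r := ENNReal.rpow_le_rpow h1 hr
    _ = 2 ^ r * (max x y) ^ r := ENNReal.mul_rpow_of_nonneg _ _ hr
    _ ≤ 2 ^ r * (x ^ r + y ^ r) := by
        gcongr
        rcases le_total x y with h | h
        · rw [max_eq_right h]; exact le_add_self
        · rw [max_eq_left h]; exact self_le_add_right _ _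

theorem statement6 (n : ℕ) (a b C₁ ε₀ s t : ℝ) (ha : 0 < a) (hC₁ : 0 < C₁)
    (hε₀0 : 0 < ε₀) (hε₀1 : ε₀ < 1) (hs0 : 0 < s) (hsa : s < 1 / a) (ht : 0 < t) :
    ∃ C > (0 : ℝ), ∀ (Ω : Set (EuclideanSpace ℝ (Fin n)))
      (U V : EuclideanSpace ℝ (Fin n) → ℝ≥0∞),
      (∀ lam ε : ℝ, 0 < lam → 0 < ε → ε < ε₀ →
        distFn Ω U (ε ^ (-a) * lam) ≤
          ENNReal.ofReal (C₁ * ε) * distFn Ω U lam + distFn Ω V (ε ^ b * lam)) →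
      lorentzNorm Ω U s t ≠ ∞ →
      lorentzNorm Ω U s t ≤ ENNReal.ofReal C * lorentzNorm Ω V s t := by
  have hr : 0 < t / s := div_pos ht hs0
  have ha' : a < 1 / s := by
    rw [lt_div_iff₀ hs0]
    rw [lt_div_iff₀ ha] at hsa
    nlinarith
  have hp : 0 < t / s - a * t := by
    have h1 : a * t < (1 / s) * t := mul_lt_mul_of_pos_right ha' ht
    have h2 : (1 / s) * t = t / s := by ring
    linarith [h2 ▸ h1]
  set p := t / s - a * t with hpdef
  set δ : ℝ := ((2:ℝ) ^ (t/s) * C₁ ^ (t/s) * 2)⁻¹ ^ (1/p) with hδdef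
  have hbase : (0:ℝ) < ((2:ℝ) ^ (t/s) * C₁ ^ (t/s) * 2)⁻¹ := by positivity
  have hδpos : 0 < δ := Real.rpow_pos_of_pos hbase _
  set ε := min (ε₀ / 2) δ with hεdef
  have hε0 : 0 < ε := lt_min (by positivity) hδpos
  have hεε₀ : ε < ε₀ := lt_of_le_of_lt (min_le_left _ _) (by linarith)
  have hεδ : ε ≤ δ := min_le_right _ _
  have hsmall : (2:ℝ) ^ (t/s) * C₁ ^ (t/s) * ε ^ p ≤ 1/2 := by
    have h1 : ε ^ p ≤ δ ^ p := Real.rpow_le_rpow hε0.le hεδ hp.le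
    have h2 : δ ^ p = ((2:ℝ) ^ (t/s) * C₁ ^ (t/s) * 2)⁻¹ := by
      rw [hδdef, ← Real.rpow_mul hbase.le, one_div, inv_mul_cancel₀ hp.ne', Real.rpow_one]
    have h3 : (0:ℝ) < (2:ℝ) ^ (t/s) * C₁ ^ (t/s) := by positivity
    calc (2:ℝ) ^ (t/s) * C₁ ^ (t/s) * ε ^ p
        ≤ (2:ℝ) ^ (t/s) * C₁ ^ (t/s) * ((2:ℝ) ^ (t/s) * C₁ ^ (t/s) * 2)⁻¹ := by
          rw [← h2]; exact mul_le_mul_of_nonneg_left h1 h3.le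
      _ = 1/2 := by field_simp
  set M : ℝ := 2 * (ε ^ (-(a*t)) * ((2:ℝ) ^ (t/s) * ε ^ (b * -t))) with hM
  have hMpos : 0 < M := by
    have := Real.rpow_pos_of_pos hε0 (-(a*t))
    have := Real.rpow_pos_of_pos hε0 (b * -t)
    have := Real.rpow_pos_of_pos (show (0:ℝ) < 2 by norm_num) (t/s)
    positivity
  refine ⟨M ^ (1/t), Real.rpow_pos_of_pos hMpos _, ?_⟩
  intro Ω U V hyp hU
  set I : (EuclideanSpace ℝ (Fin n) → ℝ≥0∞) → ℝ≥0∞ := fun g =>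
    ∫⁻ lam in Ioi (0:ℝ), ENNReal.ofReal (lam ^ (t - 1)) * (distFn Ω g lam) ^ (t / s)
    with hI
  have hLor : ∀ g, lorentzNorm Ω g s t = (ENNReal.ofReal s * I g) ^ (1/t) := fun g => rfl
  have hmeas : ∀ g : EuclideanSpace ℝ (Fin n) → ℝ≥0∞,
      Measurable (fun lam : ℝ =>
        ENNReal.ofReal (lam ^ (t-1)) * (distFn Ω g lam) ^ (t/s)) := fun g =>
    ((measurable_id.pow_const (t-1)).ennreal_ofReal).mul
      ((distFn_antitone Ω g).measurable.pow_const _)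
  have hIU : I U ≠ ∞ := by
    intro h
    apply hU
    rw [hLor U, h, ENNReal.mul_top, ENNReal.top_rpow_of_pos (by positivity)]
    simp only [ne_eq, ENNReal.ofReal_eq_zero, not_le]
    exact hs0
  -- pointwise estimate
  have hpoint : ∀ lam ∈ Ioi (0:ℝ),
      ENNReal.ofReal (lam ^ (t-1)) * (distFn Ω U (ε ^ (-a) * lam)) ^ (t/s)
        ≤ ENNReal.ofReal ((2:ℝ) ^ (t/s) * (C₁ * ε) ^ (t/s)) *
            (ENNReal.ofReal (lam ^ (t-1)) * (distFn Ω U lam) ^ (t/s))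
          + ENNReal.ofReal ((2:ℝ) ^ (t/s)) *
            (ENNReal.ofReal (lam ^ (t-1)) * (distFn Ω V (ε ^ b * lam)) ^ (t/s)) := by
    intro lam hlam
    have h0 := hyp lam ε (mem_Ioi.mp hlam) hε0 hεε₀
    have h1 : (distFn Ω U (ε ^ (-a) * lam)) ^ (t/s)
        ≤ ENNReal.ofReal ((2:ℝ) ^ (t/s)) *
          ((ENNReal.ofReal (C₁ * ε) * distFn Ω U lam) ^ (t/s)
            + (distFn Ω V (ε ^ b * lam)) ^ (t/s)) :=
      le_trans (ENNReal.rpow_le_rpow h0 hr.le) (add_rpow_le _ _ hr.le)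
    have h2 : (ENNReal.ofReal (C₁ * ε) * distFn Ω U lam) ^ (t/s)
        = ENNReal.ofReal ((C₁ * ε) ^ (t/s)) * (distFn Ω U lam) ^ (t/s) := by
      rw [ENNReal.mul_rpow_of_nonneg _ _ hr.le,
        ← ENNReal.ofReal_rpow_of_pos (by positivity)]
    calc ENNReal.ofReal (lam ^ (t-1)) * (distFn Ω U (ε ^ (-a) * lam)) ^ (t/s)
        ≤ ENNReal.ofReal (lam ^ (t-1)) * (ENNReal.ofReal ((2:ℝ) ^ (t/s)) *
            ((ENNReal.ofReal ((C₁ * ε) ^ (t/s)) * (distFn Ω U lam) ^ (t/s))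
              + (distFn Ω V (ε ^ b * lam)) ^ (t/s))) := by
          rw [← h2]; exact mul_le_mul_right h1 _
      _ = ENNReal.ofReal ((2:ℝ) ^ (t/s) * (C₁ * ε) ^ (t/s)) *
            (ENNReal.ofReal (lam ^ (t-1)) * (distFn Ω U lam) ^ (t/s))
          + ENNReal.ofReal ((2:ℝ) ^ (t/s)) *
            (ENNReal.ofReal (lam ^ (t-1)) * (distFn Ω V (ε ^ b * lam)) ^ (t/s)) := by
          rw [ENNReal.ofReal_mul (by positivity)]
          ring
  -- integrate the pointwise estimate
  have hscaleU : ∫⁻ lam in Ioi (0:ℝ),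
      ENNReal.ofReal (lam ^ (t-1)) * (distFn Ω U (ε ^ (-a) * lam)) ^ (t/s)
      = ENNReal.ofReal (ε ^ (a * t)) * I U := by
    rw [weight_scale Ω U t (t/s) (Real.rpow_pos_of_pos hε0 (-a))]
    congr 2
    rw [← Real.rpow_mul hε0.le, neg_mul_neg]
  have hscaleV : ∫⁻ lam in Ioi (0:ℝ),
      ENNReal.ofReal (lam ^ (t-1)) * (distFn Ω V (ε ^ b * lam)) ^ (t/s)
      = ENNReal.ofReal (ε ^ (b * -t)) * I V := by
    rw [weight_scale Ω V t (t/s) (Real.rpow_pos_of_pos hε0 b)]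
    congr 2
    rw [← Real.rpow_mul hε0.le]
  have key : ENNReal.ofReal (ε ^ (a * t)) * I U
      ≤ ENNReal.ofReal ((2:ℝ) ^ (t/s) * (C₁ * ε) ^ (t/s)) * I U
        + ENNReal.ofReal ((2:ℝ) ^ (t/s)) * (ENNReal.ofReal (ε ^ (b * -t)) * I V) := by
    rw [← hscaleU, ← hscaleV]
    calc ∫⁻ lam in Ioi (0:ℝ),
          ENNReal.ofReal (lam ^ (t-1)) * (distFn Ω U (ε ^ (-a) * lam)) ^ (t/s)
        ≤ ∫⁻ lam in Ioi (0:ℝ),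
            (ENNReal.ofReal ((2:ℝ) ^ (t/s) * (C₁ * ε) ^ (t/s)) *
              (ENNReal.ofReal (lam ^ (t-1)) * (distFn Ω U lam) ^ (t/s))
            + ENNReal.ofReal ((2:ℝ) ^ (t/s)) *
              (ENNReal.ofReal (lam ^ (t-1)) * (distFn Ω V (ε ^ b * lam)) ^ (t/s))) :=
          setLIntegral_mono' measurableSet_Ioi hpoint
      _ = ENNReal.ofReal ((2:ℝ) ^ (t/s) * (C₁ * ε) ^ (t/s)) * I U
          + ENNReal.ofReal ((2:ℝ) ^ (t/s)) *
            (∫⁻ lam in Ioi (0:ℝ),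
              ENNReal.ofReal (lam ^ (t-1)) * (distFn Ω V (ε ^ b * lam)) ^ (t/s)) := by
          rw [lintegral_add_left (((hmeas U).const_mul _)),
            lintegral_const_mul' _ _ ENNReal.ofReal_ne_top,
            lintegral_const_mul' _ _ ENNReal.ofReal_ne_top]
  -- multiply by ε^{-(a t)}
  have key2 : I U ≤ ENNReal.ofReal (1/2) * I U + ENNReal.ofReal (M/2) * I V := by
    have hmul := mul_le_mul_right key (ENNReal.ofReal (ε ^ (-(a * t))))
    have hl : ENNReal.ofReal (ε ^ (-(a * t))) * (ENNReal.ofReal (ε ^ (a * t)) * I U)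
        = I U := by
      rw [← mul_assoc, ← ENNReal.ofReal_mul (by positivity), ← Real.rpow_add hε0]
      norm_num
    rw [hl, mul_add, ← mul_assoc, ← mul_assoc,
      ← ENNReal.ofReal_mul (by positivity), ← ENNReal.ofReal_mul (by positivity)] at hmul
    refine hmul.trans (add_le_add ?_ ?_)
    · refine mul_le_mul_left (ENNReal.ofReal_le_ofReal ?_) _
      have hCε : (C₁ * ε) ^ (t/s) = C₁ ^ (t/s) * ε ^ (t/s) :=
        Real.mul_rpow hC₁.le hε0.le
      have hεε : ε ^ (-(a*t)) * ε ^ (t/s) = ε ^ p := by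
        rw [← Real.rpow_add hε0, hpdef]; ring_nf
      calc ε ^ (-(a*t)) * ((2:ℝ) ^ (t/s) * (C₁ * ε) ^ (t/s))
          = (2:ℝ) ^ (t/s) * C₁ ^ (t/s) * (ε ^ (-(a*t)) * ε ^ (t/s)) := by
            rw [hCε]; ring
        _ = (2:ℝ) ^ (t/s) * C₁ ^ (t/s) * ε ^ p := by rw [hεε]
        _ ≤ 1/2 := hsmall
    · rw [← mul_assoc, ← ENNReal.ofReal_mul (by positivity)]
      have hMeq : ε ^ (-(a*t)) * (2:ℝ) ^ (t/s) * ε ^ (b * -t) = M / 2 := by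
        rw [hM]; ring
      rw [hMeq]
  -- cancel
  have hhalf : ENNReal.ofReal (1/2) * I U ≠ ∞ :=
    ENNReal.mul_ne_top ENNReal.ofReal_ne_top hIU
  have hsum : ENNReal.ofReal (1/2) * I U + ENNReal.ofReal (1/2) * I U
      ≤ ENNReal.ofReal (1/2) * I U + ENNReal.ofReal (M/2) * I V := by
    refine le_trans ?_ key2
    rw [← add_mul, ← ENNReal.ofReal_add (by norm_num) (by norm_num)]
    norm_num
  have key4 : ENNReal.ofReal (1/2) * I U ≤ ENNReal.ofReal (M/2) * I V :=
    (ENNReal.add_le_add_iff_left hhalf).mp hsum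
  have key5 : I U ≤ ENNReal.ofReal M * I V := by
    calc I U = ENNReal.ofReal 2 * (ENNReal.ofReal (1/2) * I U) := by
          rw [← mul_assoc, ← ENNReal.ofReal_mul (by norm_num)]
          norm_num
      _ ≤ ENNReal.ofReal 2 * (ENNReal.ofReal (M/2) * I V) := mul_le_mul_right key4 _
      _ = ENNReal.ofReal M * I V := by
          rw [← mul_assoc, ← ENNReal.ofReal_mul (by norm_num)]
          congr 2
          ring
  -- conclude
  rw [hLor U, hLor V]
  calc (ENNReal.ofReal s * I U) ^ (1/t)
      ≤ (ENNReal.ofReal M * (ENNReal.ofReal s * I V)) ^ (1/t) := by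
        refine ENNReal.rpow_le_rpow ?_ (by positivity)
        calc ENNReal.ofReal s * I U ≤ ENNReal.ofReal s * (ENNReal.ofReal M * I V) :=
              mul_le_mul_right key5 _
          _ = ENNReal.ofReal M * (ENNReal.ofReal s * I V) := by ring
    _ = ENNReal.ofReal M ^ (1/t) * (ENNReal.ofReal s * I V) ^ (1/t) :=
        ENNReal.mul_rpow_of_nonneg _ _ (by positivity)
    _ = ENNReal.ofReal (M ^ (1/t)) * (ENNReal.ofReal s * I V) ^ (1/t) := by
        rw [ENNReal.ofReal_rpow_of_pos hMpos]
end
end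

section
/- Let Ω ⊆ ℝⁿ be measurable and let U, Π : Ω → [0, ∞] be measurable functions. Suppose there exist constants a > 0, b ∈ ℝ, C₁ > 0 and ε₀ ∈ (0,1) such that the level-set inequality d_U(ε^{−a} λ) ≤ C₁ ε d_U(λ) + d_Π(ε^{b} λ) holds for all λ > 0 and all ε ∈ (0, ε₀). Then for every s with 0 < s < 1/a, if ‖U‖_{L^{s,∞}(Ω)} < ∞, then ‖U‖_{L^{s,∞}(Ω)} ≤ C ‖Π‖_{L^{s,∞}(Ω)} for a constant C depending only on a, b, C₁, ε₀ and s. -/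
/-!
Derivation of the Marcinkiewicz (weak-`L^s`) estimate from a good-λ
(level-set) inequality (proof of Theorem C of the paper, case `t = ∞`): if
`d_U(ε^{-a} λ) ≤ C₁ ε d_U(λ) + d_V(ε^{b} λ)` for all `λ > 0`, `ε ∈ (0, ε₀)`,
then for `0 < s < 1/a`,
`‖U‖_{L^{s,∞}(Ω)} ≤ C ‖V‖_{L^{s,∞}(Ω)}` whenever `‖U‖_{L^{s,∞}(Ω)} < ∞`.
-/

open MeasureTheory Metric Set ENNReal

noncomputable section

/-- `(x+y)^r ≤ 2^r (x^r + y^r)` in `ℝ≥0∞`. -/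
lemma add_rpow_le_aux (x y : ℝ≥0∞) (r : ℝ) (hr : 0 ≤ r) :
    (x + y) ^ r ≤ ENNReal.ofReal (2 ^ r) * (x ^ r + y ^ r) := by
  have h1 : x + y ≤ 2 * (x ⊔ y) := by
    rw [two_mul]
    exact add_le_add le_sup_left le_sup_right
  calc (x + y) ^ r ≤ (2 * (x ⊔ y)) ^ r := ENNReal.rpow_le_rpow h1 hr
    _ = (2 : ℝ≥0∞) ^ r * (x ⊔ y) ^ r := ENNReal.mul_rpow_of_nonneg _ _ hr
    _ ≤ ENNReal.ofReal (2 ^ r) * (x ^ r + y ^ r) := by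
        have h2 : (2 : ℝ≥0∞) ^ r = ENNReal.ofReal (2 ^ r) := by
          rw [← ENNReal.ofReal_rpow_of_pos (by norm_num : (0:ℝ) < 2)]
          norm_num
        rw [h2]
        refine mul_le_mul_right ?_ _
        rcases le_total x y with h | h
        · rw [sup_eq_right.mpr h]; exact le_add_self
        · rw [sup_eq_left.mpr h]; exact le_self_add

theorem statement7 (n : ℕ) (a b C₁ ε₀ s : ℝ) (ha : 0 < a) (hC₁ : 0 < C₁)
    (hε₀0 : 0 < ε₀) (hε₀1 : ε₀ < 1) (hs0 : 0 < s) (hsa : s < 1 / a) :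
    ∃ C > (0 : ℝ), ∀ (Ω : Set (EuclideanSpace ℝ (Fin n)))
      (U V : EuclideanSpace ℝ (Fin n) → ℝ≥0∞),
      (∀ lam ε : ℝ, 0 < lam → 0 < ε → ε < ε₀ →
        distFn Ω U (ε ^ (-a) * lam) ≤
          ENNReal.ofReal (C₁ * ε) * distFn Ω U lam + distFn Ω V (ε ^ b * lam)) →
      weakNorm Ω U s ≠ ∞ →
      weakNorm Ω U s ≤ ENNReal.ofReal C * weakNorm Ω V s := by
  set r : ℝ := 1 / s with hr_def
  have hr0 : 0 < r := by positivity
  have hra : a < r := by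
    rw [hr_def, lt_div_iff₀ hs0]
    have := (lt_div_iff₀ ha).mp hsa
    nlinarith
  -- choose ε
  set T : ℝ := (1 / 2) / (2 ^ r * C₁ ^ r) with hT_def
  have h2r : (0:ℝ) < 2 ^ r := Real.rpow_pos_of_pos (by norm_num) r
  have hC1r : (0:ℝ) < C₁ ^ r := Real.rpow_pos_of_pos hC₁ r
  have hT0 : 0 < T := by positivity
  set δ : ℝ := T ^ (1 / (r - a)) with hδ_def
  have hδ0 : 0 < δ := Real.rpow_pos_of_pos hT0 _
  set ε : ℝ := min (ε₀ / 2) δ with hε_def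
  have hε0 : 0 < ε := lt_min (by linarith) hδ0
  have hεε₀ : ε < ε₀ := lt_of_le_of_lt (min_le_left _ _) (by linarith)
  have hεδ : ε ≤ δ := min_le_right _ _
  have hεra : ε ^ (r - a) ≤ T := by
    have h1 : ε ^ (r - a) ≤ δ ^ (r - a) :=
      Real.rpow_le_rpow hε0.le hεδ (by linarith)
    have h2 : δ ^ (r - a) = T := by
      rw [hδ_def, ← Real.rpow_mul hT0.le, one_div,
        inv_mul_cancel₀ (by linarith : r - a ≠ 0), Real.rpow_one]
    linarith [h1, h2.le, h2.ge]
  -- the small constant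
  have hKle : 2 ^ r * (C₁ * ε) ^ r * ε ^ (-a) ≤ 1 / 2 := by
    have heq : (C₁ * ε) ^ r * ε ^ (-a) = C₁ ^ r * ε ^ (r - a) := by
      rw [Real.mul_rpow hC₁.le hε0.le, mul_assoc, ← Real.rpow_add hε0]
      ring_nf
    rw [mul_assoc, heq]
    calc 2 ^ r * (C₁ ^ r * ε ^ (r - a)) ≤ 2 ^ r * (C₁ ^ r * T) := by
          apply mul_le_mul_of_nonneg_left _ h2r.le
          exact mul_le_mul_of_nonneg_left hεra hC1r.le
      _ = 1 / 2 := by rw [hT_def]; field_simp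
  refine ⟨2 * (2 ^ r * ε ^ (-(a + b))), by positivity, fun Ω U V hyp hfin => ?_⟩
  set NU := weakNorm Ω U s with hNU
  set NV := weakNorm Ω V s with hNV
  have key : ∀ μ : ℝ, 0 < μ →
      ENNReal.ofReal μ * (distFn Ω U μ) ^ r ≤
        ENNReal.ofReal (2 ^ r * (C₁ * ε) ^ r * ε ^ (-a)) * NU +
        ENNReal.ofReal (2 ^ r * ε ^ (-(a + b))) * NV := by
    intro μ hμ
    set lam : ℝ := ε ^ a * μ with hlam_def
    have hεa : (0:ℝ) < ε ^ a := Real.rpow_pos_of_pos hε0 a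
    have hlam : 0 < lam := by positivity
    have hmain := hyp lam ε hlam hε0 hεε₀
    have hμeq : ε ^ (-a) * lam = μ := by
      rw [hlam_def, ← mul_assoc, Real.rpow_neg hε0.le,
        inv_mul_cancel₀ hεa.ne', one_mul]
    rw [hμeq] at hmain
    have step1 : (distFn Ω U μ) ^ r ≤
        ENNReal.ofReal (2 ^ r) *
          ((ENNReal.ofReal (C₁ * ε)) ^ r * (distFn Ω U lam) ^ r +
            (distFn Ω V (ε ^ b * lam)) ^ r) := by
      calc (distFn Ω U μ) ^ r
          ≤ (ENNReal.ofReal (C₁ * ε) * distFn Ω U lam + distFn Ω V (ε ^ b * lam)) ^ r :=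
            ENNReal.rpow_le_rpow hmain hr0.le
        _ ≤ ENNReal.ofReal (2 ^ r) *
              ((ENNReal.ofReal (C₁ * ε) * distFn Ω U lam) ^ r +
                (distFn Ω V (ε ^ b * lam)) ^ r) := add_rpow_le_aux _ _ r hr0.le
        _ = _ := by rw [ENNReal.mul_rpow_of_nonneg _ _ hr0.le]
    have hU : ENNReal.ofReal lam * (distFn Ω U lam) ^ r ≤ NU := by
      rw [hNU, weakNorm, ← hr_def]
      exact le_iSup₂ (f := fun lam (_ : lam ∈ Set.Ioi (0:ℝ)) =>
        ENNReal.ofReal lam * (distFn Ω U lam) ^ r) lam hlam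
    have hεb : (0:ℝ) < ε ^ b := Real.rpow_pos_of_pos hε0 b
    have hV : ENNReal.ofReal (ε ^ b * lam) * (distFn Ω V (ε ^ b * lam)) ^ r ≤ NV := by
      rw [hNV, weakNorm, ← hr_def]
      exact le_iSup₂ (f := fun lam (_ : lam ∈ Set.Ioi (0:ℝ)) =>
        ENNReal.ofReal lam * (distFn Ω V lam) ^ r) (ε ^ b * lam) (mul_pos hεb hlam)
    -- decompose ofReal μ
    have hμ1 : ENNReal.ofReal μ = ENNReal.ofReal (ε ^ (-a)) * ENNReal.ofReal lam := by
      rw [← ENNReal.ofReal_mul (Real.rpow_pos_of_pos hε0 (-a)).le, hμeq]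
    have hμ2 : ENNReal.ofReal μ =
        ENNReal.ofReal (ε ^ (-(a + b))) * ENNReal.ofReal (ε ^ b * lam) := by
      rw [← ENNReal.ofReal_mul (Real.rpow_pos_of_pos hε0 (-(a+b))).le]
      congr 1
      rw [← mul_assoc, ← Real.rpow_add hε0, (by ring : -(a + b) + b = -a), hμeq]
    calc ENNReal.ofReal μ * (distFn Ω U μ) ^ r
        ≤ ENNReal.ofReal μ * (ENNReal.ofReal (2 ^ r) *
            ((ENNReal.ofReal (C₁ * ε)) ^ r * (distFn Ω U lam) ^ r +
              (distFn Ω V (ε ^ b * lam)) ^ r)) := mul_le_mul_right step1 _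
      _ = ENNReal.ofReal (2 ^ r) * ((ENNReal.ofReal (C₁ * ε)) ^ r *
            (ENNReal.ofReal μ * (distFn Ω U lam) ^ r)) +
          ENNReal.ofReal (2 ^ r) * (ENNReal.ofReal μ * (distFn Ω V (ε ^ b * lam)) ^ r) := by
            ring
      _ ≤ ENNReal.ofReal (2 ^ r) * ((ENNReal.ofReal (C₁ * ε)) ^ r *
            (ENNReal.ofReal (ε ^ (-a)) * NU)) +
          ENNReal.ofReal (2 ^ r) * (ENNReal.ofReal (ε ^ (-(a + b))) * NV) := by
            refine add_le_add (mul_le_mul_right (mul_le_mul_right ?_ _) _)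
              (mul_le_mul_right ?_ _)
            · rw [hμ1, mul_assoc]; exact mul_le_mul_right hU _
            · rw [hμ2, mul_assoc]; exact mul_le_mul_right hV _
      _ = ENNReal.ofReal (2 ^ r * (C₁ * ε) ^ r * ε ^ (-a)) * NU +
          ENNReal.ofReal (2 ^ r * ε ^ (-(a + b))) * NV := by
            rw [ENNReal.ofReal_rpow_of_pos (by positivity : (0:ℝ) < C₁ * ε),
              ENNReal.ofReal_mul (mul_nonneg h2r.le (by positivity)),
              ENNReal.ofReal_mul h2r.le, ENNReal.ofReal_mul h2r.le]
            ring
  have hsup : NU ≤ ENNReal.ofReal (2 ^ r * (C₁ * ε) ^ r * ε ^ (-a)) * NU +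
      ENNReal.ofReal (2 ^ r * ε ^ (-(a + b))) * NV := by
    rw [hNU, weakNorm, ← hr_def]
    exact iSup₂_le fun μ hμ => key μ hμ
  have hhalf : NU ≤ NU / 2 + ENNReal.ofReal (2 ^ r * ε ^ (-(a + b))) * NV := by
    refine hsup.trans (add_le_add_left ?_ _)
    calc ENNReal.ofReal (2 ^ r * (C₁ * ε) ^ r * ε ^ (-a)) * NU
        ≤ ENNReal.ofReal (1 / 2) * NU :=
          mul_le_mul_left (ENNReal.ofReal_le_ofReal hKle) _
      _ = NU / 2 := by
          rw [ENNReal.ofReal_div_of_pos (by norm_num), ENNReal.ofReal_one,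
            ENNReal.ofReal_ofNat, one_div, ENNReal.div_eq_inv_mul]
  have hstep : NU / 2 ≤ ENNReal.ofReal (2 ^ r * ε ^ (-(a + b))) * NV := by
    have h := tsub_le_iff_left.mpr hhalf
    rwa [ENNReal.sub_half hfin] at h
  calc NU = 2 * (NU / 2) := by
        rw [ENNReal.mul_div_cancel (by norm_num) (by norm_num)]
    _ ≤ 2 * (ENNReal.ofReal (2 ^ r * ε ^ (-(a + b))) * NV) := mul_le_mul_right hstep _
    _ = ENNReal.ofReal (2 * (2 ^ r * ε ^ (-(a + b)))) * NV := by
        rw [ENNReal.ofReal_mul (by norm_num : (0:ℝ) ≤ 2),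
          ENNReal.ofReal_mul h2r.le, ENNReal.ofReal_ofNat]
        ring
end
end

section
/- Let n ≥ 2, let Ω ⊆ ℝⁿ be measurable, let x ∈ ℝⁿ, ρ > 0, and let U, Π : ℝⁿ → [0, ∞] be measurable functions. Suppose there exist constants a > 0, b ∈ ℝ, C₁ > 0, ε₀ ∈ (0,1) and a threshold λ₀ ≥ 0 such that the local level-set inequality d_U(B_ρ(x); ε^{−a} λ) ≤ C₁ ε d_U(B_ρ(x); λ) + d_Π(B_ρ(x); ε^{b} λ) holds for all λ > λ₀ and all ε ∈ (0, ε₀). Then for every α with 0 < α < 1/a and every β with 0 < β < ∞, if ‖U‖_{L^{α,β}(B_ρ(x) ∩ Ω)} < ∞, then ‖U‖_{L^{α,β}(B_ρ(x) ∩ Ω)} ≤ C λ₀ ρ^{n/α} + C ‖Π‖_{L^{α,β}(B_ρ(x) ∩ Ω)} for a constant C depending only on n, a, b, C₁, ε₀, α and β. -/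
/-!
Local Lorentz estimate derived from a local good-λ (level-set) inequality with
a threshold `lam₀` (key step in the proof of Theorem D of the paper): if
`d_U(B_ρ(x); ε^{-a} λ) ≤ C₁ ε d_U(B_ρ(x); λ) + d_V(B_ρ(x); ε^{b} λ)` for all
`λ > lam₀` and `ε ∈ (0, ε₀)`, then for `0 < α < 1/a`, `0 < β < ∞`,
`‖U‖_{L^{α,β}(B_ρ(x) ∩ Ω)} ≤ C lam₀ ρ^{n/α} + C ‖V‖_{L^{α,β}(B_ρ(x) ∩ Ω)}`
whenever the left-hand side is finite, with `C = C(n, a, b, C₁, ε₀, α, β)`.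
-/

open MeasureTheory Metric Set ENNReal

noncomputable section

lemma lint_scale {f : ℝ → ℝ≥0∞} (hf : Measurable f) {c : ℝ} (hc : 0 < c) :
    ∫⁻ x in Ioi (0:ℝ), f (c * x) = ENNReal.ofReal c⁻¹ * ∫⁻ x in Ioi 0, f x := by
  have hc' : c ≠ 0 := hc.ne'
  have hpre : (c * ·) ⁻¹' Ioi (0:ℝ) = Ioi 0 := by
    ext y
    simp only [mem_preimage, mem_Ioi]
    exact mul_pos_iff_of_pos_left hc
  have h1 : Measure.map (c * ·) (volume.restrict (Ioi (0:ℝ)))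
      = (Measure.map (c * ·) volume).restrict (Ioi 0) := by
    rw [Measure.restrict_map (measurable_const_mul c) measurableSet_Ioi, hpre]
  calc ∫⁻ x in Ioi (0:ℝ), f (c * x)
      = ∫⁻ y, f y ∂(Measure.map (c * ·) (volume.restrict (Ioi (0:ℝ)))) := by
        rw [lintegral_map hf (measurable_const_mul c)]
    _ = ∫⁻ y, f y ∂((ENNReal.ofReal |c⁻¹| • volume).restrict (Ioi 0)) := by
        rw [h1, Real.map_volume_mul_left hc']
    _ = ENNReal.ofReal c⁻¹ * ∫⁻ x in Ioi 0, f x := by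
        rw [Measure.restrict_smul, lintegral_smul_measure, abs_of_pos (by positivity), smul_eq_mul]

lemma lint_rpow {r c : ℝ} (hr : -1 < r) (hc : 0 < c) :
    ∫⁻ x in Ioc (0:ℝ) c, ENNReal.ofReal (x ^ r) = ENNReal.ofReal (c ^ (r+1) / (r+1)) := by
  have hint : IntegrableOn (fun x : ℝ => x ^ r) (Ioc 0 c) := by
    rw [← intervalIntegrable_iff_integrableOn_Ioc_of_le hc.le]
    exact intervalIntegral.intervalIntegrable_rpow' hr
  rw [← ofReal_integral_eq_lintegral_ofReal hint
    (Filter.eventually_of_mem (self_mem_ae_restrict measurableSet_Ioc)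
      (fun x hx => Real.rpow_nonneg hx.1.le r))]
  congr 1
  rw [← intervalIntegral.integral_of_le hc.le, integral_rpow (Or.inl hr)]
  rw [Real.zero_rpow (by linarith : r + 1 ≠ 0)]
  ring

lemma lint_scale' {D : ℝ → ℝ≥0∞} (hD : Measurable D) {c r : ℝ} (hc : 0 < c) :
    ∫⁻ μ in Ioi (0:ℝ), ENNReal.ofReal (μ ^ r) * D (c * μ)
      = ENNReal.ofReal (c ^ (-(r+1))) *
          ∫⁻ lam in Ioi (0:ℝ), ENNReal.ofReal (lam ^ r) * D lam := by
  have hm : Measurable fun lam : ℝ => ENNReal.ofReal (lam ^ r) * D lam :=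
    ((measurable_id.pow_const r).ennreal_ofReal).mul hD
  have h0 := lint_scale hm hc
  have h1 : ∫⁻ μ in Ioi (0:ℝ), ENNReal.ofReal ((c*μ) ^ r) * D (c * μ)
      = ENNReal.ofReal (c ^ r) * ∫⁻ μ in Ioi (0:ℝ), ENNReal.ofReal (μ ^ r) * D (c * μ) := by
    rw [← lintegral_const_mul' _ _ ENNReal.ofReal_ne_top]
    refine setLIntegral_congr_fun measurableSet_Ioi
      (fun μ hμ => ?_)
    rw [Real.mul_rpow hc.le (le_of_lt hμ),
      ENNReal.ofReal_mul (Real.rpow_nonneg hc.le r), mul_assoc]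
  rw [h1] at h0
  have hcr0 : ENNReal.ofReal (c ^ r) ≠ 0 :=
    (ENNReal.ofReal_pos.mpr (Real.rpow_pos_of_pos hc r)).ne'
  refine (ENNReal.mul_right_inj hcr0 ENNReal.ofReal_ne_top).mp ?_
  rw [h0, ← mul_assoc, ← ENNReal.ofReal_mul (Real.rpow_nonneg hc.le r),
    ← Real.rpow_add hc, show r + -(r+1) = -1 by ring, Real.rpow_neg_one]

lemma my_rpow_add_le (x y : ℝ≥0∞) {p : ℝ} (hp : 0 ≤ p) :
    (x + y) ^ p ≤ 2 ^ p * (x ^ p + y ^ p) := by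
  have h1 : x + y ≤ 2 * max x y := by
    rcases le_total x y with h | h
    · calc x + y ≤ y + y := by gcongr
        _ = 2 * y := (two_mul y).symm
        _ ≤ 2 * max x y := by gcongr; exact le_max_right x y
    · calc x + y ≤ x + x := by gcongr
        _ = 2 * x := (two_mul x).symm
        _ ≤ 2 * max x y := by gcongr; exact le_max_left x y
  calc (x + y) ^ p ≤ (2 * max x y) ^ p := ENNReal.rpow_le_rpow h1 hp
    _ = 2 ^ p * (max x y) ^ p := ENNReal.mul_rpow_of_nonneg _ _ hp
    _ ≤ 2 ^ p * (x ^ p + y ^ p) := by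
        gcongr
        rcases le_total x y with h | h
        · rw [max_eq_right h]; exact le_add_left le_rfl
        · rw [max_eq_left h]; exact le_add_right le_rfl

theorem statement8 (n : ℕ) (hn : 2 ≤ n) (a b C₁ ε₀ α β : ℝ) (ha : 0 < a)
    (hC₁ : 0 < C₁) (hε₀0 : 0 < ε₀) (hε₀1 : ε₀ < 1)
    (hα0 : 0 < α) (hαa : α < 1 / a) (hβ0 : 0 < β) :
    ∃ C > (0 : ℝ), ∀ (Ω : Set (EuclideanSpace ℝ (Fin n)))
      (x : EuclideanSpace ℝ (Fin n)) (ρ lam₀ : ℝ)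
      (U V : EuclideanSpace ℝ (Fin n) → ℝ≥0∞),
      0 < ρ → 0 ≤ lam₀ →
      (∀ lam ε : ℝ, lam₀ < lam → 0 < ε → ε < ε₀ →
        distFn (ball x ρ ∩ Ω) U (ε ^ (-a) * lam) ≤
          ENNReal.ofReal (C₁ * ε) * distFn (ball x ρ ∩ Ω) U lam +
            distFn (ball x ρ ∩ Ω) V (ε ^ b * lam)) →
      lorentzNorm (ball x ρ ∩ Ω) U α β ≠ ∞ →
      lorentzNorm (ball x ρ ∩ Ω) U α β ≤
        ENNReal.ofReal (C * lam₀ * ρ ^ ((n : ℝ) / α)) +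
          ENNReal.ofReal C * lorentzNorm (ball x ρ ∩ Ω) V α β := by
  -- basic positivity facts
  have hβα : 0 < β / α := div_pos hβ0 hα0
  have haα : α * a < 1 := (lt_div_iff₀ ha).mp hαa
  have hγ : (0:ℝ) < β / α - a * β := by
    rw [sub_pos, lt_div_iff₀ hα0]; nlinarith
  -- choice of ε
  set κ : ℝ := 2 ^ (β/α) * C₁ ^ (β/α) with hκ_def
  have hκ : 0 < κ := mul_pos (Real.rpow_pos_of_pos two_pos _) (Real.rpow_pos_of_pos hC₁ _)
  set ε : ℝ := min (ε₀/2) ((2*κ) ^ (-(1/(β/α - a*β)))) with hε_def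
  have hε0 : 0 < ε :=
    lt_min (by positivity) (Real.rpow_pos_of_pos (by positivity) _)
  have hεε₀ : ε < ε₀ := (min_le_left _ _).trans_lt (by linarith)
  have key : κ * ε ^ (β/α - a*β) ≤ 1/2 := by
    have h2 : ε ≤ (2*κ) ^ (-(1/(β/α - a*β))) := min_le_right _ _
    have h3 := Real.rpow_le_rpow hε0.le h2 hγ.le
    rw [← Real.rpow_mul (by positivity : (0:ℝ) ≤ 2*κ), neg_mul, one_div,
      inv_mul_cancel₀ hγ.ne', Real.rpow_neg_one] at h3
    calc κ * ε ^ (β/α - a*β) ≤ κ * (2*κ)⁻¹ := by gcongr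
      _ = 1/2 := by field_simp
  -- the unit-ball volume constant
  haveI : Nontrivial (EuclideanSpace ℝ (Fin n)) :=
    Module.nontrivial_of_finrank_pos (R := ℝ) (by rw [finrank_euclideanSpace_fin]; omega)
  set ω : ℝ := (volume (ball (0 : EuclideanSpace ℝ (Fin n)) 1)).toReal with hω_def
  have hω : 0 < ω :=
    ENNReal.toReal_pos (measure_ball_pos volume 0 one_pos).ne' measure_ball_lt_top.ne
  -- constants
  set c₁ : ℝ := ε ^ (-a) with hc₁_def
  have hc₁ : 0 < c₁ := Real.rpow_pos_of_pos hε0 _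
  set c₂ : ℝ := ε ^ b with hc₂_def
  have hc₂ : 0 < c₂ := Real.rpow_pos_of_pos hε0 _
  set cA : ℝ := (α * 2 * c₁ ^ β * (ω ^ (β/α)) / β) ^ (1/β) with hcA_def
  have hcA : 0 < cA := Real.rpow_pos_of_pos (by positivity) _
  set cB : ℝ := (2 * c₁ ^ β * 2 ^ (β/α) * c₂ ^ (-β)) ^ (1/β) with hcB_def
  have hcB : 0 < cB := Real.rpow_pos_of_pos (by positivity) _
  refine ⟨2 ^ (1/β) * max cA cB, by positivity, ?_⟩
  intro Ω x ρ lam₀ U V hρ hlam₀ hyp hfin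
  set S : Set (EuclideanSpace ℝ (Fin n)) := ball x ρ ∩ Ω with hS_def
  -- measurability
  have hanti : ∀ W : EuclideanSpace ℝ (Fin n) → ℝ≥0∞, Antitone (distFn S W) := by
    intro W l₁ l₂ h
    exact measure_mono fun z hz =>
      ⟨hz.1, lt_of_le_of_lt (ENNReal.ofReal_le_ofReal h) hz.2⟩
  have hDm : Measurable fun lam => (distFn S U lam) ^ (β/α) :=
    ((hanti U).measurable).pow_const _
  have hEm : Measurable fun lam => (distFn S V lam) ^ (β/α) :=
    ((hanti V).measurable).pow_const _
  set I : ℝ≥0∞ :=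
    ∫⁻ lam in Ioi (0:ℝ), ENNReal.ofReal (lam ^ (β-1)) * (distFn S U lam) ^ (β/α) with hI_def
  set J : ℝ≥0∞ :=
    ∫⁻ lam in Ioi (0:ℝ), ENNReal.ofReal (lam ^ (β-1)) * (distFn S V lam) ^ (β/α) with hJ_def
  have hLU : lorentzNorm S U α β = (ENNReal.ofReal α * I) ^ (1/β) := by
    rw [lorentzNorm, hI_def]
  have hLV : lorentzNorm S V α β = (ENNReal.ofReal α * J) ^ (1/β) := by
    rw [lorentzNorm, hJ_def]
  have hI_ne : I ≠ ∞ := by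
    intro hI
    apply hfin
    rw [hLU, hI, ENNReal.mul_top (by simp [ENNReal.ofReal_eq_zero]; linarith),
      ENNReal.top_rpow_of_pos (by positivity)]
  -- the rescaled integral
  set T : ℝ≥0∞ :=
    ∫⁻ μ in Ioi (0:ℝ), ENNReal.ofReal (μ ^ (β-1)) * (distFn S U (c₁ * μ)) ^ (β/α) with hT_def
  have hT : T = ENNReal.ofReal (c₁ ^ (-β)) * I := by
    rw [hT_def, lint_scale' hDm hc₁, show -(β-1+1) = -β by ring, hI_def]
  have hI_eq : I = ENNReal.ofReal (c₁ ^ β) * T := by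
    rw [hT, ← mul_assoc, ← ENNReal.ofReal_mul (Real.rpow_nonneg hc₁.le β),
      ← Real.rpow_add hc₁, add_neg_cancel, Real.rpow_zero, ENNReal.ofReal_one, one_mul]
  -- split T at lam₀
  have hsplit : T = (∫⁻ μ in Ioc (0:ℝ) lam₀,
        ENNReal.ofReal (μ ^ (β-1)) * (distFn S U (c₁ * μ)) ^ (β/α)) +
      ∫⁻ μ in Ioi lam₀,
        ENNReal.ofReal (μ ^ (β-1)) * (distFn S U (c₁ * μ)) ^ (β/α) := by
    rw [hT_def, ← Ioc_union_Ioi_eq_Ioi hlam₀,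
      lintegral_union measurableSet_Ioi Ioc_disjoint_Ioi_same]
  -- the ball volume
  have hball : volume (ball x ρ) = ENNReal.ofReal (ρ ^ (n:ℝ) * ω) := by
    rw [Measure.addHaar_ball volume x hρ.le, finrank_euclideanSpace_fin, hω_def,
      ENNReal.ofReal_mul (by positivity), ENNReal.ofReal_toReal measure_ball_lt_top.ne,
      Real.rpow_natCast]
  -- Term A
  have hA : (∫⁻ μ in Ioc (0:ℝ) lam₀,
        ENNReal.ofReal (μ ^ (β-1)) * (distFn S U (c₁ * μ)) ^ (β/α)) ≤
      ENNReal.ofReal (lam₀ ^ β / β) * ENNReal.ofReal ((ρ ^ (n:ℝ) * ω) ^ (β/α)) := by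
    have hdb : ∀ t : ℝ, distFn S U t ≤ ENNReal.ofReal (ρ ^ (n:ℝ) * ω) := by
      intro t
      rw [← hball]
      exact measure_mono fun z hz => hz.1.1
    calc (∫⁻ μ in Ioc (0:ℝ) lam₀,
          ENNReal.ofReal (μ ^ (β-1)) * (distFn S U (c₁ * μ)) ^ (β/α))
        ≤ ∫⁻ μ in Ioc (0:ℝ) lam₀,
            ENNReal.ofReal (μ ^ (β-1)) * ENNReal.ofReal ((ρ ^ (n:ℝ) * ω) ^ (β/α)) := by
          refine setLIntegral_mono' measurableSet_Ioc fun μ hμ => ?_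
          rw [← ENNReal.ofReal_rpow_of_nonneg (by positivity) hβα.le]
          exact mul_le_mul_right (ENNReal.rpow_le_rpow (hdb _) hβα.le) _
      _ = (∫⁻ μ in Ioc (0:ℝ) lam₀, ENNReal.ofReal (μ ^ (β-1))) *
            ENNReal.ofReal ((ρ ^ (n:ℝ) * ω) ^ (β/α)) :=
          lintegral_mul_const' _ _ ENNReal.ofReal_ne_top
      _ ≤ ENNReal.ofReal (lam₀ ^ β / β) * ENNReal.ofReal ((ρ ^ (n:ℝ) * ω) ^ (β/α)) := by
          gcongr
          rcases eq_or_lt_of_le hlam₀ with h0 | h0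
          · rw [← h0]; simp
          · rw [lint_rpow (by linarith) h0, show β - 1 + 1 = β by ring]
  -- Term B
  have hB : (∫⁻ μ in Ioi lam₀,
        ENNReal.ofReal (μ ^ (β-1)) * (distFn S U (c₁ * μ)) ^ (β/α)) ≤
      (2 ^ (β/α) * ENNReal.ofReal (C₁ * ε) ^ (β/α)) * I +
        2 ^ (β/α) * (ENNReal.ofReal (c₂ ^ (-β)) * J) := by
    have h2top : (2:ℝ≥0∞) ^ (β/α) ≠ ∞ :=
      ENNReal.rpow_ne_top_of_nonneg hβα.le (by norm_num)
    calc (∫⁻ μ in Ioi lam₀,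
          ENNReal.ofReal (μ ^ (β-1)) * (distFn S U (c₁ * μ)) ^ (β/α))
        ≤ ∫⁻ μ in Ioi lam₀,
            (2 ^ (β/α) * ENNReal.ofReal (C₁ * ε) ^ (β/α)) *
              (ENNReal.ofReal (μ ^ (β-1)) * (distFn S U μ) ^ (β/α)) +
            2 ^ (β/α) * (ENNReal.ofReal (μ ^ (β-1)) * (distFn S V (c₂ * μ)) ^ (β/α)) := by
          refine setLIntegral_mono' measurableSet_Ioi fun μ hμ => ?_
          have h1 := hyp μ ε hμ hε0 hεε₀
          have h2 : (distFn S U (c₁ * μ)) ^ (β/α) ≤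
              2 ^ (β/α) * ((ENNReal.ofReal (C₁ * ε) * distFn S U μ) ^ (β/α) +
                (distFn S V (c₂ * μ)) ^ (β/α)) :=
            le_trans (ENNReal.rpow_le_rpow h1 hβα.le) (my_rpow_add_le _ _ hβα.le)
          calc ENNReal.ofReal (μ ^ (β-1)) * (distFn S U (c₁ * μ)) ^ (β/α)
              ≤ ENNReal.ofReal (μ ^ (β-1)) *
                  (2 ^ (β/α) * ((ENNReal.ofReal (C₁ * ε) * distFn S U μ) ^ (β/α) +
                    (distFn S V (c₂ * μ)) ^ (β/α))) := mul_le_mul_right h2 _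
            _ = (2 ^ (β/α) * ENNReal.ofReal (C₁ * ε) ^ (β/α)) *
                  (ENNReal.ofReal (μ ^ (β-1)) * (distFn S U μ) ^ (β/α)) +
                2 ^ (β/α) * (ENNReal.ofReal (μ ^ (β-1)) * (distFn S V (c₂ * μ)) ^ (β/α)) := by
                rw [ENNReal.mul_rpow_of_nonneg _ _ hβα.le]; ring
      _ = (2 ^ (β/α) * ENNReal.ofReal (C₁ * ε) ^ (β/α)) *
            (∫⁻ μ in Ioi lam₀, ENNReal.ofReal (μ ^ (β-1)) * (distFn S U μ) ^ (β/α)) +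
          2 ^ (β/α) *
            ∫⁻ μ in Ioi lam₀, ENNReal.ofReal (μ ^ (β-1)) * (distFn S V (c₂ * μ)) ^ (β/α) := by
          rw [lintegral_add_left (f := fun μ => (2 ^ (β/α) * ENNReal.ofReal (C₁ * ε) ^ (β/α)) *
                (ENNReal.ofReal (μ ^ (β-1)) * (distFn S U μ) ^ (β/α)))
            ((measurable_const.mul
              (((measurable_id'.pow_const (β-1)).ennreal_ofReal).mul hDm))),
            lintegral_const_mul' _ _
              (ENNReal.mul_ne_top h2top
                (ENNReal.rpow_ne_top_of_nonneg hβα.le ENNReal.ofReal_ne_top)),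
            lintegral_const_mul' _ _ h2top]
      _ ≤ (2 ^ (β/α) * ENNReal.ofReal (C₁ * ε) ^ (β/α)) * I +
            2 ^ (β/α) * (ENNReal.ofReal (c₂ ^ (-β)) * J) := by
          gcongr
          · exact lintegral_mono_set (Ioi_subset_Ioi hlam₀)
          · calc (∫⁻ μ in Ioi lam₀,
                ENNReal.ofReal (μ ^ (β-1)) * (distFn S V (c₂ * μ)) ^ (β/α))
                ≤ ∫⁻ μ in Ioi (0:ℝ),
                    ENNReal.ofReal (μ ^ (β-1)) * (distFn S V (c₂ * μ)) ^ (β/α) :=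
                  lintegral_mono_set (Ioi_subset_Ioi hlam₀)
              _ = ENNReal.ofReal (c₂ ^ (-β)) * J := by
                  rw [lint_scale' hEm hc₂, show -(β-1+1) = -β by ring, hJ_def]
  -- absorption
  set KA : ℝ≥0∞ := ENNReal.ofReal (c₁ ^ β) *
    (ENNReal.ofReal (lam₀ ^ β / β) * ENNReal.ofReal ((ρ ^ (n:ℝ) * ω) ^ (β/α))) with hKA_def
  set KJ : ℝ≥0∞ := ENNReal.ofReal (c₁ ^ β) *
    (2 ^ (β/α) * (ENNReal.ofReal (c₂ ^ (-β)) * J)) with hKJ_def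
  have h2of : (2:ℝ≥0∞) ^ (β/α) = ENNReal.ofReal (2 ^ (β/α)) := by
    rw [← ENNReal.ofReal_rpow_of_pos two_pos, ENNReal.ofReal_ofNat]
  have hcoef : ENNReal.ofReal (c₁ ^ β) * (2 ^ (β/α) * ENNReal.ofReal (C₁ * ε) ^ (β/α)) ≤ 2⁻¹ := by
    have e0 : ENNReal.ofReal (C₁ * ε) ^ (β/α) = ENNReal.ofReal ((C₁ * ε) ^ (β/α)) :=
      ENNReal.ofReal_rpow_of_pos (by positivity)
    rw [h2of, e0, ← ENNReal.ofReal_mul (Real.rpow_nonneg (by norm_num : (0:ℝ) ≤ 2) _),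
      ← ENNReal.ofReal_mul (Real.rpow_nonneg hc₁.le β)]
    have e1 : c₁ ^ β = ε ^ (-(a*β)) := by
      rw [hc₁_def, ← Real.rpow_mul hε0.le, neg_mul]
    have e2 : (C₁ * ε) ^ (β/α) = C₁ ^ (β/α) * ε ^ (β/α) := Real.mul_rpow hC₁.le hε0.le
    have h2 : c₁ ^ β * (2 ^ (β/α) * (C₁ * ε) ^ (β/α)) ≤ 1/2 := by
      rw [e1, e2]
      calc ε ^ (-(a*β)) * (2 ^ (β/α) * (C₁ ^ (β/α) * ε ^ (β/α)))
          = κ * (ε ^ (-(a*β)) * ε ^ (β/α)) := by rw [hκ_def]; ring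
        _ = κ * ε ^ (β/α - a*β) := by
            rw [← Real.rpow_add hε0, show -(a*β) + β/α = β/α - a*β by ring]
        _ ≤ 1/2 := key
    calc ENNReal.ofReal (c₁ ^ β * (2 ^ (β/α) * (C₁ * ε) ^ (β/α)))
        ≤ ENNReal.ofReal (1/2) := ENNReal.ofReal_le_ofReal h2
      _ = 2⁻¹ := by rw [ENNReal.ofReal_div_of_pos two_pos]; simp
  have hmain : I ≤ KA + KJ + 2⁻¹ * I := by
    calc I = ENNReal.ofReal (c₁ ^ β) *
        ((∫⁻ μ in Ioc (0:ℝ) lam₀,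
            ENNReal.ofReal (μ ^ (β-1)) * (distFn S U (c₁ * μ)) ^ (β/α)) +
          ∫⁻ μ in Ioi lam₀,
            ENNReal.ofReal (μ ^ (β-1)) * (distFn S U (c₁ * μ)) ^ (β/α)) := by
          rw [hI_eq, hsplit]
      _ ≤ ENNReal.ofReal (c₁ ^ β) *
          ((ENNReal.ofReal (lam₀ ^ β / β) * ENNReal.ofReal ((ρ ^ (n:ℝ) * ω) ^ (β/α))) +
            ((2 ^ (β/α) * ENNReal.ofReal (C₁ * ε) ^ (β/α)) * I +
              2 ^ (β/α) * (ENNReal.ofReal (c₂ ^ (-β)) * J))) :=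
          mul_le_mul_right (add_le_add hA hB) _
      _ = KA + KJ + (ENNReal.ofReal (c₁ ^ β) *
            (2 ^ (β/α) * ENNReal.ofReal (C₁ * ε) ^ (β/α))) * I := by
          rw [hKA_def, hKJ_def]; ring
      _ ≤ KA + KJ + 2⁻¹ * I := add_le_add_right (mul_le_mul_left hcoef I) _
  have habs : I ≤ 2 * (KA + KJ) := by
    have hI2 : I / 2 ≠ ∞ := (ENNReal.div_lt_top hI_ne two_ne_zero).ne
    have h1 : I/2 + I/2 ≤ (KA + KJ) + I/2 := by
      rw [ENNReal.add_halves]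
      calc I ≤ KA + KJ + 2⁻¹ * I := hmain
        _ = (KA + KJ) + I/2 := by rw [div_eq_mul_inv, mul_comm I]
    have h2 : I/2 ≤ KA + KJ := (ENNReal.add_le_add_iff_right hI2).mp h1
    calc I = I/2 * 2 := (ENNReal.div_mul_cancel two_ne_zero ENNReal.ofNat_ne_top).symm
      _ ≤ (KA + KJ) * 2 := mul_le_mul_left h2 2
      _ = 2 * (KA + KJ) := mul_comm _ _
  -- final assembly
  have hXA : ENNReal.ofReal α * (2 * KA) =
      ENNReal.ofReal (2 * α * (c₁ ^ β * (lam₀ ^ β / β * (ρ ^ (n:ℝ) * ω) ^ (β/α)))) := by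
    have hnn3 : (0:ℝ) ≤ lam₀ ^ β / β := div_nonneg (Real.rpow_nonneg hlam₀ β) hβ0.le
    rw [hKA_def, show (2:ℝ≥0∞) = ENNReal.ofReal 2 from (ENNReal.ofReal_ofNat 2).symm,
      ENNReal.ofReal_mul (by linarith : (0:ℝ) ≤ 2 * α),
      ENNReal.ofReal_mul (by norm_num : (0:ℝ) ≤ (2:ℝ)),
      ENNReal.ofReal_mul (Real.rpow_nonneg hc₁.le β),
      ENNReal.ofReal_mul hnn3]
    ring
  have hXJ : ENNReal.ofReal α * (2 * KJ) =
      ENNReal.ofReal (2 * c₁ ^ β * 2 ^ (β/α) * c₂ ^ (-β)) * (ENNReal.ofReal α * J) := by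
    have hnn1 : (0:ℝ) ≤ c₁ ^ β := Real.rpow_nonneg hc₁.le β
    have hnn4 : (0:ℝ) ≤ (2:ℝ) ^ (β/α) := Real.rpow_nonneg (by norm_num) _
    rw [hKJ_def, h2of, show (2:ℝ≥0∞) = ENNReal.ofReal 2 from (ENNReal.ofReal_ofNat 2).symm,
      ENNReal.ofReal_mul (by positivity : (0:ℝ) ≤ 2 * c₁ ^ β * 2 ^ (β/α)),
      ENNReal.ofReal_mul (by positivity : (0:ℝ) ≤ 2 * c₁ ^ β),
      ENNReal.ofReal_mul (by norm_num : (0:ℝ) ≤ (2:ℝ))]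
    ring
  have hrealA : (2 * α * (c₁ ^ β * (lam₀ ^ β / β * (ρ ^ (n:ℝ) * ω) ^ (β/α)))) ^ (1/β) =
      cA * lam₀ * ρ ^ ((n:ℝ)/α) := by
    have hrw : (ρ ^ (n:ℝ) * ω) ^ (β/α) = ρ ^ ((n:ℝ) * (β/α)) * ω ^ (β/α) := by
      rw [Real.mul_rpow (Real.rpow_nonneg hρ.le _) hω.le, ← Real.rpow_mul hρ.le]
    rw [hrw, show 2 * α * (c₁ ^ β * (lam₀ ^ β / β * (ρ ^ ((n:ℝ) * (β/α)) * ω ^ (β/α)))) =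
        (α * 2 * c₁ ^ β * ω ^ (β/α) / β) * lam₀ ^ β * ρ ^ ((n:ℝ) * (β/α)) by ring,
      Real.mul_rpow (by positivity) (Real.rpow_nonneg hρ.le _),
      Real.mul_rpow (by positivity) (Real.rpow_nonneg hlam₀ β),
      ← Real.rpow_mul hlam₀, mul_one_div, div_self hβ0.ne', Real.rpow_one,
      ← Real.rpow_mul hρ.le, hcA_def,
      show (n:ℝ) * (β/α) * (1/β) = (n:ℝ)/α by field_simp]
  have hfinal : lorentzNorm S U α β ≤
      ENNReal.ofReal (2 ^ (1/β)) * (ENNReal.ofReal (cA * lam₀ * ρ ^ ((n:ℝ)/α)) +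
        ENNReal.ofReal cB * lorentzNorm S V α β) := by
    calc lorentzNorm S U α β = (ENNReal.ofReal α * I) ^ (1/β) := hLU
      _ ≤ (ENNReal.ofReal α * (2 * (KA + KJ))) ^ (1/β) :=
        ENNReal.rpow_le_rpow (mul_le_mul_right habs _) (by positivity)
      _ = (ENNReal.ofReal α * (2 * KA) + ENNReal.ofReal α * (2 * KJ)) ^ (1/β) := by
        ring_nf
      _ ≤ 2 ^ ((1:ℝ)/β) * ((ENNReal.ofReal α * (2 * KA)) ^ (1/β) +
            (ENNReal.ofReal α * (2 * KJ)) ^ (1/β)) :=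
        my_rpow_add_le _ _ (by positivity)
      _ = ENNReal.ofReal (2 ^ (1/β)) * (ENNReal.ofReal (cA * lam₀ * ρ ^ ((n:ℝ)/α)) +
            ENNReal.ofReal cB * lorentzNorm S V α β) := by
        rw [hXA, hXJ, ENNReal.ofReal_rpow_of_nonneg (by positivity) (by positivity),
          hrealA, ENNReal.mul_rpow_of_nonneg _ _ (by positivity),
          ENNReal.ofReal_rpow_of_nonneg (by positivity) (by positivity),
          ← hcB_def, ← hLV, ← ENNReal.ofReal_rpow_of_pos two_pos, ENNReal.ofReal_ofNat]
  refine hfinal.trans ?_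
  have h2nn : (0:ℝ) ≤ 2 ^ ((1:ℝ)/β) := Real.rpow_nonneg (by norm_num) _
  have hρnn : (0:ℝ) ≤ lam₀ * ρ ^ ((n:ℝ)/α) :=
    mul_nonneg hlam₀ (Real.rpow_nonneg hρ.le _)
  rw [mul_add]
  refine add_le_add ?_ ?_
  · rw [← ENNReal.ofReal_mul h2nn]
    apply ENNReal.ofReal_le_ofReal
    rw [show (2:ℝ) ^ ((1:ℝ)/β) * (cA * lam₀ * ρ ^ ((n:ℝ)/α)) =
        (2 ^ ((1:ℝ)/β) * cA) * (lam₀ * ρ ^ ((n:ℝ)/α)) by ring,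
      show (2:ℝ) ^ ((1:ℝ)/β) * max cA cB * lam₀ * ρ ^ ((n:ℝ)/α) =
        (2 ^ ((1:ℝ)/β) * max cA cB) * (lam₀ * ρ ^ ((n:ℝ)/α)) by ring]
    exact mul_le_mul_of_nonneg_right
      (mul_le_mul_of_nonneg_left (le_max_left _ _) h2nn) hρnn
  · rw [← mul_assoc, ← ENNReal.ofReal_mul h2nn]
    exact mul_le_mul_left (ENNReal.ofReal_le_ofReal
      (mul_le_mul_of_nonneg_left (le_max_right _ _) h2nn)) _
end
end
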